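/- arXiv:1208.5956 — 5 statements merged into one kernel-verified Lean document; each statement's English description precedes it below -/
import Mathlib

section
/- Fix natural numbers n and m with 1 ≤ n ≤ m and a sample f : Fin n → ZMod m. Then every player is seated: for each player i the displacement d f i is well defined and satisfies d f i ≤ i, and the map sending each player i to its final chair f i + d f i is injective. -/
/-- `reject f i` is the number of rejections suffered by player `i` in the sample `f`:
the least `j : ℕ` such that the chair `f i + j` is not the final chair of any
earlier player `i' < i` (each player `i'` ends up at chair `f i' + reject f i'`). -/
noncomputable def reject {n m : ℕ} (f : Fin n → ZMod m) : Fin n → ℕ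
  | i => sInf {j : ℕ | ∀ i' : Fin n, i' < i → f i + (j : ZMod m) ≠ f i' + (reject f i' : ZMod m)}
termination_by i => i.val

theorem stmt2 (n m : ℕ) (h1 : 1 ≤ n) (h2 : n ≤ m) (f : Fin n → ZMod m) :
    (∀ i : Fin n,
      {j : ℕ | ∀ i' : Fin n, i' < i →
          f i + (j : ZMod m) ≠ f i' + (reject f i' : ZMod m)}.Nonempty ∧
      reject f i ≤ i) ∧
    Function.Injective (fun i : Fin n => f i + (reject f i : ZMod m)) := by
  haveI : NeZero m := ⟨by omega⟩
  have key : ∀ i : Fin n,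
      {j : ℕ | ∀ i' : Fin n, i' < i →
          f i + (j : ZMod m) ≠ f i' + (reject f i' : ZMod m)}.Nonempty ∧
      reject f i ≤ i := by
    intro i
    -- counting argument
    set A : Finset (ZMod m) := (Finset.range (i.val + 1)).image (fun j : ℕ => f i + (j : ZMod m))
      with hA
    set B : Finset (ZMod m) :=
      (Finset.Iio i).image (fun i' => f i' + (reject f i' : ZMod m)) with hB
    have hcardA : A.card = i.val + 1 := by
      rw [hA, Finset.card_image_of_injOn, Finset.card_range]
      intro j1 hj1 j2 hj2 h
      simp only [Finset.mem_coe, Finset.mem_range] at hj1 hj2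
      have h' : (j1 : ZMod m) = (j2 : ZMod m) := by
        have := add_left_cancel h
        exact this
      have e1 : ((j1 : ZMod m)).val = j1 := ZMod.val_cast_of_lt (by omega)
      have e2 : ((j2 : ZMod m)).val = j2 := ZMod.val_cast_of_lt (by omega)
      rw [← e1, ← e2, h']
    have hcardB : B.card ≤ i.val := by
      calc B.card ≤ (Finset.Iio i).card := Finset.card_image_le
        _ = i.val := Fin.card_Iio i
    have hlt : B.card < A.card := by omega
    have hns : ¬ A ⊆ B := fun hsub => absurd (Finset.card_le_card hsub) (by omega)
    obtain ⟨a, haA, haB⟩ := Finset.not_subset.mp hns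
    rw [hA, Finset.mem_image] at haA
    obtain ⟨j, hj, rfl⟩ := haA
    rw [Finset.mem_range] at hj
    have hjS : j ∈ {j : ℕ | ∀ i' : Fin n, i' < i →
        f i + (j : ZMod m) ≠ f i' + (reject f i' : ZMod m)} := by
      intro i' hi' heq
      exact haB (Finset.mem_image.mpr ⟨i', Finset.mem_Iio.mpr hi', heq.symm⟩)
    refine ⟨⟨j, hjS⟩, ?_⟩
    rw [reject]
    exact le_trans (Nat.sInf_le hjS) (by omega)
  refine ⟨key, ?_⟩
  have mem : ∀ i : Fin n, ∀ i' : Fin n, i' < i →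
      f i + (reject f i : ZMod m) ≠ f i' + (reject f i' : ZMod m) := by
    intro i
    have h := Nat.sInf_mem (key i).1
    rw [reject]
    exact h
  intro i1 i2 h
  simp only at h
  by_contra hne
  rcases lt_or_gt_of_ne hne with hlt | hlt
  · exact mem i2 i1 hlt h.symm
  · exact mem i1 i2 hlt h
end

section
/- Fix natural numbers n and m with 1 ≤ n ≤ m, a sample f : Fin n → ZMod m, and a permutation σ of Fin n. Then the total number of rejections is independent of the order in which the players are seated: D (f ∘ σ) = D f. (In particular, the simultaneous musical-chairs version of the game, in which all players arrive before any searching begins, suffers the same total number of rejections as the sequential version.) -/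
/-- The total number of rejections of the sample `f`. -/
noncomputable def totalRejections {n m : ℕ} (f : Fin n → ZMod m) : ℕ :=
  ∑ i, reject f i

noncomputable def park {m : ℕ} (O : Set (ZMod m)) (a : ZMod m) : ℕ :=
  sInf {j : ℕ | a + (j : ZMod m) ∉ O}

def occ {n m : ℕ} (f : Fin n → ZMod m) (t : ℕ) : Set (ZMod m) :=
  {c | ∃ i : Fin n, i.val < t ∧ c = f i + (reject f i : ZMod m)}

lemma occ_zero {n m : ℕ} (f : Fin n → ZMod m) : occ f 0 = ∅ := by
  ext c; simp [occ]

lemma occ_succ {n m : ℕ} (f : Fin n → ZMod m) {t : ℕ} (ht : t < n) :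
    occ f (t + 1) = insert (f ⟨t, ht⟩ + (reject f ⟨t, ht⟩ : ZMod m)) (occ f t) := by
  ext c
  simp only [occ, Set.mem_setOf_eq, Set.mem_insert_iff]
  constructor
  · rintro ⟨i, hi, rfl⟩
    rcases Nat.lt_succ_iff_lt_or_eq.mp hi with h | h
    · exact Or.inr ⟨i, h, rfl⟩
    · left
      have : i = ⟨t, ht⟩ := Fin.ext h
      rw [this]
  · rintro (h | ⟨i, hi, rfl⟩)
    · exact ⟨⟨t, ht⟩, Nat.lt_succ_self t, h⟩
    · exact ⟨i, Nat.lt_succ_of_lt hi, rfl⟩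

lemma occ_card {n m : ℕ} [NeZero m] (f : Fin n → ZMod m) (t : ℕ) :
    ∃ S : Finset (ZMod m), occ f t ⊆ ↑S ∧ S.card ≤ t := by
  classical
  refine ⟨(Finset.univ.filter (fun i : Fin n => i.val < t)).image
    (fun i => f i + (reject f i : ZMod m)), ?_, ?_⟩
  · rintro c ⟨i, hi, rfl⟩
    simp only [Finset.coe_image, Set.mem_image, Finset.mem_coe, Finset.mem_filter,
      Finset.mem_univ, true_and]
    exact ⟨i, hi, rfl⟩
  · refine (Finset.card_image_le).trans ?_
    have : (Finset.univ.filter (fun i : Fin n => i.val < t)).card ≤ (Finset.range t).card := by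
      refine Finset.card_le_card_of_injOn (fun i => i.val) ?_ ?_
      · intro i hi
        simp only [Finset.mem_coe, Finset.mem_filter] at hi
        simp [hi.2]
      · intro a _ b _ h
        exact Fin.ext h
    simpa using this

lemma exists_free {n m : ℕ} [NeZero m] (f : Fin n → ZMod m) (t : ℕ) (ht : t + 1 ≤ m) :
    ∃ c, c ∉ occ f t := by
  classical
  obtain ⟨S, hsub, hcard⟩ := occ_card f t
  have hc : 0 < Sᶜ.card := by
    rw [Finset.card_compl, ZMod.card]
    omega
  obtain ⟨c, hc⟩ := Finset.card_pos.mp hc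
  exact ⟨c, fun h => (Finset.mem_compl.mp hc) (hsub h)⟩

lemma exists_two_free {n m : ℕ} [NeZero m] (f : Fin n → ZMod m) (t : ℕ) (ht : t + 2 ≤ m) :
    ∃ c₁ c₂ : ZMod m, c₁ ≠ c₂ ∧ c₁ ∉ occ f t ∧ c₂ ∉ occ f t := by
  classical
  obtain ⟨S, hsub, hcard⟩ := occ_card f t
  have hc : 1 < Sᶜ.card := by
    rw [Finset.card_compl, ZMod.card]
    omega
  obtain ⟨c₁, h1, c₂, h2, hne⟩ := Finset.one_lt_card.mp hc
  exact ⟨c₁, c₂, hne, fun h => (Finset.mem_compl.mp h1) (hsub h),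
    fun h => (Finset.mem_compl.mp h2) (hsub h)⟩

lemma nat_sInf_eq {S : Set ℕ} {d : ℕ} (hd : d ∈ S) (h : ∀ j < d, j ∉ S) : sInf S = d := by
  refine le_antisymm (Nat.sInf_le hd) ?_
  by_contra hlt
  exact h _ (lt_of_not_ge hlt) (Nat.sInf_mem ⟨d, hd⟩)

section park
variable {m : ℕ} [NeZero m] {O : Set (ZMod m)} {a b : ZMod m}

lemma park_set_nonempty (hfree : ∃ c, c ∉ O) (a : ZMod m) :
    {j : ℕ | a + (j : ZMod m) ∉ O}.Nonempty := by
  obtain ⟨c, hc⟩ := hfree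
  refine ⟨(c - a).val, ?_⟩
  simp only [Set.mem_setOf_eq, ZMod.natCast_zmod_val]
  rwa [add_sub_cancel]

lemma park_not_mem (hfree : ∃ c, c ∉ O) : a + (park O a : ZMod m) ∉ O :=
  Nat.sInf_mem (park_set_nonempty hfree a)

omit [NeZero m] in
lemma park_mem_of_lt {j : ℕ} (hj : j < park O a) : a + (j : ZMod m) ∈ O := by
  by_contra h
  exact absurd (Nat.sInf_le h) (not_le.mpr hj)

lemma park_insert_of_ne {x : ZMod m} (hfree : ∃ c, c ∉ O)
    (hx : x ≠ b + (park O b : ZMod m)) :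
    park (insert x O) b = park O b := by
  refine nat_sInf_eq ?_ ?_
  · simp only [Set.mem_setOf_eq, Set.mem_insert_iff, not_or]
    exact ⟨fun h => hx h.symm, park_not_mem hfree⟩
  · intro j hj hmem
    exact hmem (Set.mem_insert_iff.mpr (Or.inr (park_mem_of_lt hj)))

lemma park_succ_ne {c : ZMod m} (hc : c ∉ O) (hcA : c ≠ a) :
    a + 1 + (park O (a + 1) : ZMod m) ≠ a := by
  have hval : 1 ≤ (c - a).val := ZMod.val_pos.mpr (sub_ne_zero.mpr hcA)
  have hcast : (((c - a).val - 1 : ℕ) : ZMod m) = (c - a) - 1 := by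
    rw [Nat.cast_sub hval, ZMod.natCast_zmod_val, Nat.cast_one]
  have hmem : (a + 1) + (((c - a).val - 1 : ℕ) : ZMod m) = c := by
    rw [hcast]; ring
  have hle : park O (a + 1) ≤ (c - a).val - 1 := Nat.sInf_le (by
    show (a + 1) + _ ∉ O
    rw [hmem]; exact hc)
  have hlt : (c - a).val < m := ZMod.val_lt _
  intro heq
  have h0 : ((1 + park O (a + 1) : ℕ) : ZMod m) = 0 := by
    have : a + ((1 + park O (a + 1) : ℕ) : ZMod m) = a + 0 := by
      push_cast
      rw [add_zero, ← add_assoc]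
      exact heq
    exact add_left_cancel this
  have hdvd : m ∣ 1 + park O (a + 1) := (ZMod.natCast_eq_zero_iff _ _).mp h0
  have := Nat.le_of_dvd (by omega) hdvd
  omega


end park

section park2
variable {m : ℕ} [NeZero m] {O : Set (ZMod m)} {a b : ZMod m}

lemma second_park (hfree2 : ∃ c₁ c₂ : ZMod m, c₁ ≠ c₂ ∧ c₁ ∉ O ∧ c₂ ∉ O)
    (hAB : a + (park O a : ZMod m) = b + (park O b : ZMod m)) :
    park (insert (a + (park O a : ZMod m)) O) b
      = park O b + 1 + park O (a + (park O a : ZMod m) + 1) := by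
  set A := a + (park O a : ZMod m) with hA
  obtain ⟨c₁, c₂, hne, h1, h2⟩ := hfree2
  have hfree : ∃ c, c ∉ O := ⟨c₁, h1⟩
  have hcex : ∃ c, c ∉ O ∧ c ≠ A := by
    by_cases h : c₁ = A
    · exact ⟨c₂, h2, fun hh => hne (h.trans hh.symm)⟩
    · exact ⟨c₁, h1, h⟩
  obtain ⟨c, hc, hcA⟩ := hcex
  have hCne : A + 1 + (park O (A + 1) : ZMod m) ≠ A := park_succ_ne hc hcA
  have hCO : (A + 1) + (park O (A + 1) : ZMod m) ∉ O := park_not_mem hfree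
  refine nat_sInf_eq ?_ ?_
  · show b + ((park O b + 1 + park O (A + 1) : ℕ) : ZMod m) ∉ insert A O
    have hcalc : b + ((park O b + 1 + park O (A + 1) : ℕ) : ZMod m)
        = A + 1 + (park O (A + 1) : ZMod m) := by
      push_cast
      linear_combination hAB.symm
    rw [hcalc]
    rintro (h | h)
    · exact hCne h
    · exact hCO h
  · intro j hj hmem
    rcases lt_trichotomy j (park O b) with h | h | h
    · exact hmem (Or.inr (park_mem_of_lt h))
    · exact hmem (Or.inl (by rw [h]; exact hAB.symm))
    · have hj' : j - park O b - 1 < park O (A + 1) := by omega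
      have hcalc : b + (j : ZMod m) = (A + 1) + ((j - park O b - 1 : ℕ) : ZMod m) := by
        have hsplit : (j : ℕ) = park O b + 1 + (j - park O b - 1) := by omega
        have hc2 : ((j : ℕ) : ZMod m) = ((park O b + 1 + (j - park O b - 1) : ℕ) : ZMod m) := by
          exact_mod_cast congrArg (fun x : ℕ => ((x : ℕ) : ZMod m)) hsplit
        rw [hc2]
        push_cast
        linear_combination hAB.symm
      exact hmem (Or.inr (by rw [hcalc]; exact park_mem_of_lt hj'))

lemma pair_sum (hfree2 : ∃ c₁ c₂ : ZMod m, c₁ ≠ c₂ ∧ c₁ ∉ O ∧ c₂ ∉ O) :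
    park O a + park (insert (a + (park O a : ZMod m)) O) b
      = park O b + park (insert (b + (park O b : ZMod m)) O) a := by
  obtain ⟨c₁, c₂, hne, h1, h2⟩ := hfree2
  have hfree : ∃ c, c ∉ O := ⟨c₁, h1⟩
  by_cases h : a + (park O a : ZMod m) = b + (park O b : ZMod m)
  · rw [second_park ⟨c₁, c₂, hne, h1, h2⟩ h, second_park ⟨c₁, c₂, hne, h1, h2⟩ h.symm, ← h]
    omega
  · rw [park_insert_of_ne hfree h, park_insert_of_ne hfree (fun hh => h hh.symm)]
    omega

lemma pair_set (hfree2 : ∃ c₁ c₂ : ZMod m, c₁ ≠ c₂ ∧ c₁ ∉ O ∧ c₂ ∉ O) :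
    insert (b + (park (insert (a + (park O a : ZMod m)) O) b : ZMod m))
        (insert (a + (park O a : ZMod m)) O)
      = insert (a + (park (insert (b + (park O b : ZMod m)) O) a : ZMod m))
        (insert (b + (park O b : ZMod m)) O) := by
  obtain ⟨c₁, c₂, hne, h1, h2⟩ := hfree2
  have hfree : ∃ c, c ∉ O := ⟨c₁, h1⟩
  by_cases h : a + (park O a : ZMod m) = b + (park O b : ZMod m)
  · rw [second_park ⟨c₁, c₂, hne, h1, h2⟩ h, second_park ⟨c₁, c₂, hne, h1, h2⟩ h.symm, ← h]
    congr 1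
    push_cast
    linear_combination h.symm
  · rw [park_insert_of_ne hfree h, park_insert_of_ne hfree (fun hh => h hh.symm)]
    rw [Set.insert_comm]

end park2

lemma reject_eq_park {n m : ℕ} (f : Fin n → ZMod m) (i : Fin n) :
    reject f i = park (occ f i.val) (f i) := by
  rw [reject, park]
  congr 1
  ext j
  constructor
  · rintro h ⟨i', hi', heq⟩
    exact h i' hi' heq
  · intro h i' hi' heq
    exact h ⟨i', hi', heq⟩

lemma swap_step {n m : ℕ} [NeZero m] (hnm : n ≤ m) (f : Fin n → ZMod m)
    (k : ℕ) (hk : k + 1 < n) :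
    totalRejections (f ∘ Equiv.swap ⟨k, Nat.lt_of_succ_lt hk⟩ ⟨k + 1, hk⟩)
      = totalRejections f := by
  classical
  have hkn : k < n := Nat.lt_of_succ_lt hk
  set x : Fin n := ⟨k, hkn⟩ with hx
  set y : Fin n := ⟨k + 1, hk⟩ with hy
  set g : Fin n → ZMod m := f ∘ Equiv.swap x y with hg
  have hgval : ∀ i : Fin n, i.val ≠ k → i.val ≠ k + 1 → g i = f i := by
    intro i h1 h2
    have hix : i ≠ x := fun h => h1 (by rw [h])
    have hiy : i ≠ y := fun h => h2 (by rw [h])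
    simp [hg, Equiv.swap_apply_of_ne_of_ne hix hiy]
  have hgx : g x = f y := by simp [hg]
  have hgy : g y = f x := by simp [hg]
  have step1 : ∀ t, t ≤ k →
      occ g t = occ f t ∧ ∀ i : Fin n, i.val < t → reject g i = reject f i := by
    intro t
    induction t with
    | zero =>
      intro _
      refine ⟨by rw [occ_zero, occ_zero], fun i hi => absurd hi (by omega)⟩
    | succ t ih =>
      intro ht
      obtain ⟨hO, hr⟩ := ih (by omega)
      have htn : t < n := by omega
      have hrt : reject g ⟨t, htn⟩ = reject f ⟨t, htn⟩ := by
        rw [reject_eq_park, reject_eq_park]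
        show park (occ g t) (g ⟨t, htn⟩) = park (occ f t) (f ⟨t, htn⟩)
        rw [hO, hgval ⟨t, htn⟩ (show t ≠ k by omega) (show t ≠ k + 1 by omega)]
      refine ⟨?_, ?_⟩
      · rw [occ_succ g htn, occ_succ f htn, hO, hrt,
          hgval ⟨t, htn⟩ (show t ≠ k by omega) (show t ≠ k + 1 by omega)]
      · intro i hi
        rcases Nat.lt_succ_iff_lt_or_eq.mp hi with h | h
        · exact hr i h
        · have : i = ⟨t, htn⟩ := Fin.ext h
          rw [this]; exact hrt
  obtain ⟨hOk, hrk⟩ := step1 k le_rfl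
  have hfree2 : ∃ c₁ c₂ : ZMod m, c₁ ≠ c₂ ∧ c₁ ∉ occ f k ∧ c₂ ∉ occ f k :=
    exists_two_free f k (by omega)
  set a : ZMod m := f x with ha
  set b : ZMod m := f y with hb
  have hfa : reject f x = park (occ f k) a := reject_eq_park f x
  have hga : reject g x = park (occ f k) b := by
    rw [reject_eq_park]
    show park (occ g k) (g x) = _
    rw [hOk, hgx]
  have hfb : reject f y = park (insert (a + (park (occ f k) a : ZMod m)) (occ f k)) b := by
    rw [reject_eq_park]
    show park (occ f (k + 1)) (f y) = _
    rw [occ_succ f hkn, hfa]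
  have hgb : reject g y = park (insert (b + (park (occ f k) b : ZMod m)) (occ f k)) a := by
    rw [reject_eq_park]
    show park (occ g (k + 1)) (g y) = _
    rw [occ_succ g hkn, hOk, hga, hgx, hgy]
  have hsum : reject g x + reject g y = reject f x + reject f y := by
    rw [hga, hgb, hfa, hfb]
    exact (pair_sum hfree2).symm
  have hO2 : occ g (k + 2) = occ f (k + 2) := by
    rw [show k + 2 = (k + 1) + 1 from rfl, occ_succ g hk, occ_succ f hk,
      occ_succ g hkn, occ_succ f hkn, hOk]
    show insert (g y + _) (insert (g x + (reject g x : ZMod m)) _)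
      = insert (f y + _) (insert (f x + (reject f x : ZMod m)) _)
    rw [hgx, hgy, hga, hgb, hfa, hfb]
    exact (pair_set hfree2).symm
  have step3 : ∀ t, k + 2 ≤ t → t ≤ n →
      occ g t = occ f t ∧ ∀ i : Fin n, k + 2 ≤ i.val → i.val < t → reject g i = reject f i := by
    intro t
    induction t with
    | zero => intro h; omega
    | succ t ih =>
      intro ht htn
      rcases Nat.lt_or_ge t (k + 2) with h | h
      · have : t + 1 = k + 2 := by omega
        rw [this]
        exact ⟨hO2, fun i hi hi' => by omega⟩
      · obtain ⟨hO, hr⟩ := ih (by omega) (by omega)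
        have htn' : t < n := by omega
        have hrt : reject g ⟨t, htn'⟩ = reject f ⟨t, htn'⟩ := by
          rw [reject_eq_park, reject_eq_park]
          show park (occ g t) (g ⟨t, htn'⟩) = park (occ f t) (f ⟨t, htn'⟩)
          rw [hO, hgval ⟨t, htn'⟩ (show t ≠ k by omega) (show t ≠ k + 1 by omega)]
        refine ⟨?_, ?_⟩
        · rw [occ_succ g htn', occ_succ f htn', hO, hrt,
            hgval ⟨t, htn'⟩ (show t ≠ k by omega) (show t ≠ k + 1 by omega)]
        · intro i hi hi'
          rcases Nat.lt_succ_iff_lt_or_eq.mp hi' with h' | h'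
          · exact hr i hi h'
          · have : i = ⟨t, htn'⟩ := Fin.ext h'
            rw [this]; exact hrt
  have hrej : ∀ i : Fin n, i ≠ x → i ≠ y → reject g i = reject f i := by
    intro i h1 h2
    have h1' : i.val ≠ k := fun h => h1 (Fin.ext h)
    have h2' : i.val ≠ k + 1 := fun h => h2 (Fin.ext h)
    rcases Nat.lt_or_ge i.val k with h | h
    · exact hrk i h
    · exact (step3 n (by omega) le_rfl).2 i (by omega) i.isLt
  have hxy : x ≠ y := by
    intro h
    have := congrArg Fin.val h
    simp [hx, hy] at this
  rw [totalRejections, totalRejections,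
    ← Finset.sum_add_sum_compl ({x, y} : Finset (Fin n)) (reject g),
    ← Finset.sum_add_sum_compl ({x, y} : Finset (Fin n)) (reject f)]
  congr 1
  · rw [Finset.sum_pair hxy, Finset.sum_pair hxy]
    exact hsum
  · refine Finset.sum_congr rfl ?_
    intro i hi
    simp only [Finset.mem_compl, Finset.mem_insert, Finset.mem_singleton, not_or] at hi
    exact hrej i hi.1 hi.2

lemma adj_swap {n m : ℕ} [NeZero m] (hnm : n ≤ m) (x y : Fin n) (hxy : x.val + 1 = y.val)
    (h : Fin n → ZMod m) :
    totalRejections (h ∘ Equiv.swap x y) = totalRejections h := by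
  have hk : x.val + 1 < n := hxy ▸ y.isLt
  have hy' : y = ⟨x.val + 1, hk⟩ := Fin.ext hxy.symm
  rw [hy']
  exact swap_step hnm h x.val hk

lemma swap_all {n m : ℕ} [NeZero m] (hnm : n ≤ m) :
    ∀ d : ℕ, ∀ x y : Fin n, x < y → y.val - x.val ≤ d →
      ∀ h : Fin n → ZMod m, totalRejections (h ∘ Equiv.swap x y) = totalRejections h := by
  intro d
  induction d with
  | zero =>
    intro x y hxy hd h
    have : x.val < y.val := hxy
    omega
  | succ d ih =>
    intro x y hxy hd h
    have hlt : x.val < y.val := hxy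
    by_cases hadj : x.val + 1 = y.val
    · exact adj_swap hnm x y hadj h
    · set y' : Fin n := ⟨y.val - 1, by omega⟩ with hy'
      have hxy' : x < y' := by
        show x.val < y'.val
        show x.val < y.val - 1
        omega
      have hne1 : x ≠ y' := Fin.ne_of_lt hxy'
      have hne2 : x ≠ y := Fin.ne_of_lt hxy
      have hadj1 : ∀ h' : Fin n → ZMod m,
          totalRejections (h' ∘ Equiv.swap y' y) = totalRejections h' :=
        adj_swap hnm y' y (by show y.val - 1 + 1 = y.val; omega)
      have key : Equiv.swap x y = Equiv.swap y' y * Equiv.swap x y' * Equiv.swap y' y := by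
        have h1 : Equiv.swap y' y x = x := Equiv.swap_apply_of_ne_of_ne hne1 hne2
        have h2 : Equiv.swap y' y y' = y := Equiv.swap_apply_left _ _
        calc Equiv.swap x y = Equiv.swap (Equiv.swap y' y x) (Equiv.swap y' y y') := by
              rw [h1, h2]
          _ = Equiv.swap y' y * Equiv.swap x y' * (Equiv.swap y' y)⁻¹ :=
              Equiv.swap_apply_apply _ _ _
          _ = Equiv.swap y' y * Equiv.swap x y' * Equiv.swap y' y := by rw [Equiv.swap_inv]
      rw [key]
      have comp : h ∘ ⇑(Equiv.swap y' y * Equiv.swap x y' * Equiv.swap y' y)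
          = ((h ∘ ⇑(Equiv.swap y' y)) ∘ ⇑(Equiv.swap x y')) ∘ ⇑(Equiv.swap y' y) := rfl
      rw [comp, hadj1, ih x y' hxy' (by show y.val - 1 - x.val ≤ d; omega), hadj1]

theorem stmt4 (n m : ℕ) (h1 : 1 ≤ n) (h2 : n ≤ m) (f : Fin n → ZMod m)
    (σ : Equiv.Perm (Fin n)) :
    totalRejections (f ∘ σ) = totalRejections f := by
  haveI : NeZero m := ⟨by omega⟩
  suffices H : ∀ σ : Equiv.Perm (Fin n), ∀ h : Fin n → ZMod m,
      totalRejections (h ∘ σ) = totalRejections h from H σ f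
  intro σ
  refine Equiv.Perm.swap_induction_on σ ?_ ?_
  · intro h; rfl
  · intro π x y hxy ih h
    have comp : h ∘ ⇑(Equiv.swap x y * π) = (h ∘ ⇑(Equiv.swap x y)) ∘ ⇑π := rfl
    rw [comp, ih]
    rcases lt_or_gt_of_ne hxy with hlt | hlt
    · exact swap_all h2 (y.val - x.val) x y hlt le_rfl h
    · rw [Equiv.swap_comm]
      exact swap_all h2 (x.val - y.val) y x hlt le_rfl h
end

section
/- Fix natural numbers n, m, k with 2 ≤ k ≤ n ≤ m. Then twice the number of k-patterns equals m · n!/(n-k)!; that is, 2 · |{P : Fin n → Option (ZMod m) | P is a k-pattern}| = m · n!/(n-k)!. -/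
/-- A partial assignment `P : Fin n → Option (ZMod m)` is a `k`-pattern when there is
a chair `c` such that exactly two players are assigned chair `c`, for each
`1 ≤ j ≤ k - 2` exactly one player is assigned chair `c + j`, and no player is
assigned any other chair. -/
def IsPattern {n m : ℕ} (k : ℕ) (P : Fin n → Option (ZMod m)) : Prop :=
  ∃ c : ZMod m,
    Nat.card {i : Fin n // P i = some c} = 2 ∧
    (∀ j : ℕ, 1 ≤ j → j ≤ k - 2 →
      Nat.card {i : Fin n // P i = some (c + (j : ZMod m))} = 1) ∧
    (∀ i : Fin n, ∀ c' : ZMod m, P i = some c' →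
      ∃ j : ℕ, j ≤ k - 2 ∧ c' = c + (j : ZMod m))

namespace Stmt6Aux

variable {n m k : ℕ}

noncomputable def mk (c : ZMod m) (f : Fin k ↪ Fin n) : Fin n → Option (ZMod m) :=
  fun i => if h : ∃ j : Fin k, f j = i then
    some (c + (((h.choose : ℕ) - 1 : ℕ) : ZMod m)) else none

lemma mk_apply (c : ZMod m) (f : Fin k ↪ Fin n) (j : Fin k) :
    mk c f (f j) = some (c + (((j : ℕ) - 1 : ℕ) : ZMod m)) := by
  have h : ∃ j' : Fin k, f j' = f j := ⟨j, rfl⟩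
  have hj : h.choose = j := f.injective h.choose_spec
  simp only [mk, dif_pos h, hj]

lemma mk_eq_some {c : ZMod m} {f : Fin k ↪ Fin n} {i : Fin n} {d : ZMod m}
    (h : mk c f i = some d) :
    ∃ j : Fin k, f j = i ∧ d = c + (((j : ℕ) - 1 : ℕ) : ZMod m) := by
  by_cases hex : ∃ j : Fin k, f j = i
  · obtain ⟨j, hj⟩ := hex
    refine ⟨j, hj, ?_⟩
    rw [← hj, mk_apply] at h
    exact (Option.some_inj.mp h).symm
  · simp only [mk, dif_neg hex] at h
    exact absurd h (by simp)

lemma mk_eq_none {c : ZMod m} {f : Fin k ↪ Fin n} {i : Fin n}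
    (h : ∀ j : Fin k, f j ≠ i) : mk c f i = none := by
  have hex : ¬ ∃ j : Fin k, f j = i := by push_neg; exact h
  simp only [mk, dif_neg hex]

lemma cast_inj (hm : 0 < m) {a b : ℕ} (ha : a < m) (hb : b < m)
    (h : (a : ZMod m) = b) : a = b := by
  haveI : NeZero m := ⟨hm.ne'⟩
  have h2 := congrArg ZMod.val h
  rwa [ZMod.val_cast_of_lt ha, ZMod.val_cast_of_lt hb] at h2

lemma add_cast_inj (hm : 0 < m) {c : ZMod m} {a b : ℕ} (ha : a < m) (hb : b < m)
    (h : c + (a : ZMod m) = c + b) : a = b :=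
  cast_inj hm ha hb (add_left_cancel h)

lemma isPattern_mk (hk : 2 ≤ k) (hkm : k ≤ m) (c : ZMod m) (f : Fin k ↪ Fin n) :
    IsPattern k (mk c f) := by
  have hm : 0 < m := by omega
  refine ⟨c, ?_, ?_, ?_⟩
  · rw [Nat.card_eq_two_iff]
    have h0 : mk c f (f ⟨0, by omega⟩) = some c := by
      have h := mk_apply c f ⟨0, by omega⟩; simpa using h
    have h1 : mk c f (f ⟨1, by omega⟩) = some c := by
      have h := mk_apply c f ⟨1, by omega⟩; simpa using h
    refine ⟨⟨f ⟨0, by omega⟩, h0⟩, ⟨f ⟨1, by omega⟩, h1⟩, ?_, ?_⟩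
    · simp only [ne_eq, Subtype.mk.injEq]
      intro h; exact absurd (f.injective h) (by simp [Fin.ext_iff])
    · ext ⟨i, hi⟩
      simp only [Set.mem_insert_iff, Set.mem_singleton_iff, Set.mem_univ, iff_true,
        Subtype.mk.injEq]
      obtain ⟨j, hji, hd⟩ := mk_eq_some hi
      have hj0 : (0 : ℕ) = (j : ℕ) - 1 := by
        refine add_cast_inj (c := c) hm (by omega) (by have := j.isLt; omega) ?_
        simpa using hd
      have : (j : ℕ) = 0 ∨ (j : ℕ) = 1 := by omega
      rcases this with h | h
      · left; rw [← hji]; congr 1; exact Fin.ext h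
      · right; rw [← hji]; congr 1; exact Fin.ext h
  · intro j' h1j hj'
    rw [Nat.card_eq_one_iff_exists]
    have hlt : j' + 1 < k := by omega
    have happ : mk c f (f ⟨j' + 1, hlt⟩) = some (c + (j' : ZMod m)) := by
      have h := mk_apply c f ⟨j' + 1, hlt⟩
      simpa using h
    refine ⟨⟨f ⟨j' + 1, hlt⟩, happ⟩, ?_⟩
    rintro ⟨i, hi⟩
    obtain ⟨j, hji, hd⟩ := mk_eq_some hi
    have hj1 : (j' : ℕ) = (j : ℕ) - 1 :=
      add_cast_inj hm (by omega) (by have := j.isLt; omega) hd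
    have : (j : ℕ) = j' + 1 := by omega
    have hj : j = ⟨j' + 1, hlt⟩ := Fin.ext this
    subst hj hji
    rfl
  · intro i c' hic'
    obtain ⟨j, hji, hd⟩ := mk_eq_some hic'
    exact ⟨(j : ℕ) - 1, by have := j.isLt; omega, hd⟩


def swapEmb (hk : 2 ≤ k) (f : Fin k ↪ Fin n) : Fin k ↪ Fin n :=
  (Equiv.swap (⟨0, by omega⟩ : Fin k) ⟨1, by omega⟩).toEmbedding.trans f

lemma swapEmb_apply (hk : 2 ≤ k) (f : Fin k ↪ Fin n) (j : Fin k) :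
    swapEmb hk f j = f (Equiv.swap (⟨0, by omega⟩ : Fin k) ⟨1, by omega⟩ j) := rfl

lemma mk_eq_mk (hk : 2 ≤ k) (hkm : k ≤ m) {c₁ c₂ : ZMod m} {f₁ f₂ : Fin k ↪ Fin n}
    (h : mk c₁ f₁ = mk c₂ f₂) : c₂ = c₁ ∧ (f₂ = f₁ ∨ f₂ = swapEmb hk f₁) := by
  have hm : 0 < m := by omega
  set j0 : Fin k := ⟨0, by omega⟩ with hj0def
  set j1 : Fin k := ⟨1, by omega⟩ with hj1def
  have hA : mk c₁ f₁ (f₂ j0) = some c₂ := by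
    rw [h]; have h' := mk_apply c₂ f₂ j0; simpa [hj0def] using h'
  have hB : mk c₁ f₁ (f₂ j1) = some c₂ := by
    rw [h]; have h' := mk_apply c₂ f₂ j1; simpa [hj1def] using h'
  obtain ⟨ja, hja, hda⟩ := mk_eq_some hA
  obtain ⟨jb, hjb, hdb⟩ := mk_eq_some hB
  have hne : (ja : ℕ) ≠ (jb : ℕ) := by
    intro e
    have e1 : ja = jb := Fin.ext e
    have e2 : f₂ j0 = f₂ j1 := by rw [← hja, ← hjb, e1]
    have e3 : j0 = j1 := f₂.injective e2
    simp [hj0def, hj1def, Fin.ext_iff] at e3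
  have heq : (ja : ℕ) - 1 = (jb : ℕ) - 1 :=
    add_cast_inj (c := c₁) hm (by have := ja.isLt; omega) (by have := jb.isLt; omega)
      (hda.symm.trans hdb)
  have hcase : ((ja : ℕ) = 0 ∧ (jb : ℕ) = 1) ∨ ((ja : ℕ) = 1 ∧ (jb : ℕ) = 0) := by omega
  have hc : c₂ = c₁ := by
    have hz : (ja : ℕ) - 1 = 0 := by omega
    rw [hda, hz]; simp
  refine ⟨hc, ?_⟩
  have key : ∀ j : Fin k, ∃ j' : Fin k, f₁ j' = f₂ j ∧ (j' : ℕ) - 1 = (j : ℕ) - 1 := by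
    intro j
    have hj : mk c₁ f₁ (f₂ j) = some (c₁ + (((j : ℕ) - 1 : ℕ) : ZMod m)) := by
      rw [h, mk_apply, hc]
    obtain ⟨j', hj', hd'⟩ := mk_eq_some hj
    exact ⟨j', hj',
      (add_cast_inj (c := c₁) hm (by have := j'.isLt; omega) (by have := j.isLt; omega)
        hd'.symm)⟩
  have key2 : ∀ j : Fin k, 2 ≤ (j : ℕ) → f₂ j = f₁ j := by
    intro j hj2
    obtain ⟨j', hj', he⟩ := key j
    have hv : (j' : ℕ) = (j : ℕ) := by omega
    rw [← hj']; congr 1; exact Fin.ext hv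
  have hja' := hja; have hjb' := hjb
  rcases hcase with ⟨ha0, hb1⟩ | ⟨ha1, hb0⟩
  · left
    have e0 : ja = j0 := Fin.ext ha0
    have e1 : jb = j1 := Fin.ext hb1
    refine DFunLike.ext _ _ fun j => ?_
    rcases Nat.lt_or_ge (j : ℕ) 2 with hj2 | hj2
    · have hj01 : j = j0 ∨ j = j1 := by
        have hv : (j : ℕ) = 0 ∨ (j : ℕ) = 1 := by omega
        rcases hv with hv | hv
        · exact Or.inl (Fin.ext hv)
        · exact Or.inr (Fin.ext hv)
      rcases hj01 with rfl | rfl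
      · rw [← hja, e0]
      · rw [← hjb, e1]
    · exact key2 j hj2
  · right
    have e0 : ja = j1 := Fin.ext ha1
    have e1 : jb = j0 := Fin.ext hb0
    refine DFunLike.ext _ _ fun j => ?_
    rcases Nat.lt_or_ge (j : ℕ) 2 with hj2 | hj2
    · have hj01 : j = j0 ∨ j = j1 := by
        have hv : (j : ℕ) = 0 ∨ (j : ℕ) = 1 := by omega
        rcases hv with hv | hv
        · exact Or.inl (Fin.ext hv)
        · exact Or.inr (Fin.ext hv)
      rcases hj01 with rfl | rfl
      · rw [swapEmb_apply, Equiv.swap_apply_left, ← hja, e0]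
      · rw [swapEmb_apply, Equiv.swap_apply_right, ← hjb, e1]
    · rw [swapEmb_apply, Equiv.swap_apply_of_ne_of_ne, key2 j hj2]
      · intro e; rw [e] at hj2; simp [hj0def] at hj2
      · intro e; rw [e] at hj2; simp [hj1def] at hj2


lemma exists_mk (hk : 2 ≤ k) (hkn : k ≤ n) (hnm : n ≤ m)
    {P : Fin n → Option (ZMod m)} (hP : IsPattern k P) :
    ∃ (c : ZMod m) (f : Fin k ↪ Fin n), mk c f = P := by
  classical
  have hm : 0 < m := by omega
  obtain ⟨c, h2, h1, h3⟩ := hP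
  rw [Nat.card_eq_two_iff] at h2
  obtain ⟨⟨a, ha⟩, ⟨b, hb⟩, hab, huniv⟩ := h2
  have habne : a ≠ b := fun e => hab (Subtype.ext e)
  have hcover : ∀ i, P i = some c → i = a ∨ i = b := by
    intro i hi
    have hmem : (⟨i, hi⟩ : {i : Fin n // P i = some c}) ∈
        ({⟨a, ha⟩, ⟨b, hb⟩} : Set {i : Fin n // P i = some c}) := by
      rw [huniv]; trivial
    rcases hmem with hmem | hmem
    · exact Or.inl (congrArg Subtype.val hmem)
    · exact Or.inr (congrArg Subtype.val hmem)
  have hu0 : ∀ j' : ℕ, ∃ i : Fin n, 1 ≤ j' → j' ≤ k - 2 →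
      P i = some (c + (j' : ZMod m)) ∧ ∀ i', P i' = some (c + (j' : ZMod m)) → i' = i := by
    intro j'
    by_cases hcond : 1 ≤ j' ∧ j' ≤ k - 2
    · have hcard := h1 j' hcond.1 hcond.2
      rw [Nat.card_eq_one_iff_exists] at hcard
      obtain ⟨⟨i, hi⟩, hun⟩ := hcard
      exact ⟨i, fun _ _ => ⟨hi, fun i' hi' => congrArg Subtype.val (hun ⟨i', hi'⟩)⟩⟩
    · exact ⟨a, fun hx hy => absurd ⟨hx, hy⟩ hcond⟩
  choose u hu using hu0
  set f : Fin k → Fin n := fun j =>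
    if (j : ℕ) = 0 then a else if (j : ℕ) = 1 then b else u ((j : ℕ) - 1) with hfdef
  have hval : ∀ j : Fin k, P (f j) = some (c + (((j : ℕ) - 1 : ℕ) : ZMod m)) := by
    intro j
    rcases Nat.lt_or_ge (j : ℕ) 2 with hj2 | hj2
    · have hv : (j : ℕ) = 0 ∨ (j : ℕ) = 1 := by omega
      rcases hv with hv | hv
      · have e : f j = a := by simp [hfdef, hv]
        simp [e, ha, hv]
      · have e : f j = b := by simp [hfdef, hv]
        simp [e, hb, hv]
    · have hv0 : ¬ ((j : ℕ) = 0) := by omega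
      have hv1 : ¬ ((j : ℕ) = 1) := by omega
      simp only [hfdef, if_neg hv0, if_neg hv1]
      have hb1 : 1 ≤ (j : ℕ) - 1 := by omega
      have hb2 : (j : ℕ) - 1 ≤ k - 2 := by have := j.isLt; omega
      exact (hu ((j : ℕ) - 1) hb1 hb2).1
  have hinj : Function.Injective f := by
    intro j j' hjj'
    have hv : P (f j) = P (f j') := by rw [hjj']
    rw [hval j, hval j'] at hv
    have heq : (j : ℕ) - 1 = (j' : ℕ) - 1 :=
      add_cast_inj (c := c) hm (by have := j.isLt; omega) (by have := j'.isLt; omega)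
        (Option.some_inj.mp hv)
    rcases Nat.lt_or_ge (j : ℕ) 2 with hj2 | hj2
    · have hj'2 : (j' : ℕ) < 2 := by omega
      -- j, j' ∈ {0, 1}; use that a ≠ b
      have hv0 : ((j : ℕ) = 0 ∨ (j : ℕ) = 1) ∧ ((j' : ℕ) = 0 ∨ (j' : ℕ) = 1) := by omega
      by_contra hne
      have hvne : (j : ℕ) ≠ (j' : ℕ) := fun e => hne (Fin.ext e)
      have hab' : a = b ∨ b = a := by
        rcases hv0.1 with h0 | h0 <;> rcases hv0.2 with h0' | h0'
        · exact absurd (h0.trans h0'.symm) hvne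
        · left
          have e1 : f j = a := by simp [hfdef, h0]
          have e2 : f j' = b := by simp [hfdef, h0']
          rw [← e1, ← e2, hjj']
        · right
          have e1 : f j = b := by simp [hfdef, h0]
          have e2 : f j' = a := by simp [hfdef, h0']
          rw [← e1, ← e2, hjj']
        · exact absurd (h0.trans h0'.symm) hvne
      rcases hab' with e | e
      · exact habne e
      · exact habne e.symm
    · have hvv : (j : ℕ) = (j' : ℕ) := by omega
      exact Fin.ext hvv
  refine ⟨c, ⟨f, hinj⟩, ?_⟩
  funext i
  by_cases hex : ∃ j : Fin k, f j = i
  · obtain ⟨j, rfl⟩ := hex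
    have happ := mk_apply c ⟨f, hinj⟩ j
    exact happ.trans (hval j).symm
  · rw [mk_eq_none (by push_neg at hex; exact hex)]
    cases hPi : P i with
    | none => rfl
    | some c' =>
      exfalso
      obtain ⟨j', hj'k, rfl⟩ := h3 i c' hPi
      rcases Nat.eq_zero_or_pos j' with rfl | hj'pos
      · have hPc : P i = some c := by rw [hPi]; simp
        rcases hcover i hPc with rfl | rfl
        · exact hex ⟨⟨0, by omega⟩, by simp [hfdef]⟩
        · exact hex ⟨⟨1, by omega⟩, by simp [hfdef]⟩
      · have hiu : i = u j' := (hu j' hj'pos hj'k).2 i hPi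
        refine hex ⟨⟨j' + 1, by omega⟩, ?_⟩
        have hv0 : ¬ ((j' + 1 : ℕ) = 0) := by omega
        have hv1 : ¬ ((j' + 1 : ℕ) = 1) := by omega
        simp only [hfdef, hv0, hv1, if_false]
        rw [hiu]
        congr 1


lemma mk_swapEmb (hk : 2 ≤ k) (c : ZMod m) (f : Fin k ↪ Fin n) :
    mk c (swapEmb hk f) = mk c f := by
  funext i
  by_cases hex : ∃ j : Fin k, f j = i
  · obtain ⟨j, rfl⟩ := hex
    set e : Equiv.Perm (Fin k) := Equiv.swap (⟨0, by omega⟩ : Fin k) ⟨1, by omega⟩ with hedef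
    have h1 : swapEmb hk f (e j) = f j := by
      rw [swapEmb_apply, ← hedef, Equiv.swap_apply_self]
    have hval : ((e j : Fin k) : ℕ) - 1 = (j : ℕ) - 1 := by
      rcases Nat.lt_or_ge (j : ℕ) 2 with hj2 | hj2
      · have hv : (j : ℕ) = 0 ∨ (j : ℕ) = 1 := by omega
        rcases hv with hv | hv
        · have : j = (⟨0, by omega⟩ : Fin k) := Fin.ext hv
          rw [this, hedef, Equiv.swap_apply_left]; rfl
        · have : j = (⟨1, by omega⟩ : Fin k) := Fin.ext hv
          rw [this, hedef, Equiv.swap_apply_right]; rfl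
      · rw [hedef, Equiv.swap_apply_of_ne_of_ne]
        · intro hc; rw [hc] at hj2; simp at hj2
        · intro hc; rw [hc] at hj2; simp at hj2
    calc mk c (swapEmb hk f) (f j)
        = mk c (swapEmb hk f) (swapEmb hk f (e j)) := by rw [h1]
      _ = some (c + ((((e j : Fin k) : ℕ) - 1 : ℕ) : ZMod m)) := mk_apply c (swapEmb hk f) (e j)
      _ = some (c + (((j : ℕ) - 1 : ℕ) : ZMod m)) := by rw [hval]
      _ = mk c f (f j) := (mk_apply c f j).symm
  · push_neg at hex
    rw [mk_eq_none hex, mk_eq_none]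
    intro j hj
    exact hex _ hj

end Stmt6Aux

theorem stmt6 (n m k : ℕ) (hk : 2 ≤ k) (hkn : k ≤ n) (hnm : n ≤ m) :
    2 * Nat.card {P : Fin n → Option (ZMod m) // IsPattern k P} =
      m * n.descFactorial k := by
  classical
  have hkm : k ≤ m := hkn.trans hnm
  haveI : NeZero m := ⟨by omega⟩
  set Φ : ZMod m × (Fin k ↪ Fin n) → {P : Fin n → Option (ZMod m) // IsPattern k P} :=
    fun x => ⟨Stmt6Aux.mk x.1 x.2, Stmt6Aux.isPattern_mk hk hkm x.1 x.2⟩ with hΦ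
  haveI : Fintype {P : Fin n → Option (ZMod m) // IsPattern k P} := Fintype.ofFinite _
  have hfib : ∀ P : {P : Fin n → Option (ZMod m) // IsPattern k P},
      Nat.card {x : ZMod m × (Fin k ↪ Fin n) // Φ x = P} = 2 := by
    rintro ⟨P, hP⟩
    obtain ⟨c, f, hcf⟩ := Stmt6Aux.exists_mk hk hkn hnm hP
    rw [Nat.card_eq_two_iff]
    refine ⟨⟨(c, f), Subtype.ext hcf⟩,
      ⟨(c, Stmt6Aux.swapEmb hk f), Subtype.ext ((Stmt6Aux.mk_swapEmb hk c f).trans hcf)⟩,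
      ?_, ?_⟩
    · intro e
      have he : f = Stmt6Aux.swapEmb hk f := by
        have := congrArg (fun x => x.val.2) e
        simpa using this
      have h01 : f ⟨0, by omega⟩ = f ⟨1, by omega⟩ := by
        conv_lhs => rw [he]
        rw [Stmt6Aux.swapEmb_apply, Equiv.swap_apply_left]
      have := f.injective h01
      simp [Fin.ext_iff] at this
    · rw [Set.eq_univ_iff_forall]
      rintro ⟨⟨c', f'⟩, hx⟩
      have hmk : Stmt6Aux.mk c f = Stmt6Aux.mk c' f' := by
        have hval := congrArg Subtype.val hx
        simp only [hΦ] at hval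
        exact hcf.trans hval.symm
      obtain ⟨rfl, rfl | rfl⟩ := Stmt6Aux.mk_eq_mk hk hkm hmk
      · exact Or.inl (Subtype.ext rfl)
      · exact Or.inr (Subtype.ext rfl)
  have hsig : Nat.card (ZMod m × (Fin k ↪ Fin n)) =
      ∑ P : {P : Fin n → Option (ZMod m) // IsPattern k P},
        Nat.card {x : ZMod m × (Fin k ↪ Fin n) // Φ x = P} := by
    rw [← Nat.card_congr (Equiv.sigmaFiberEquiv Φ), Nat.card_eq_fintype_card,
      Fintype.card_sigma]
    exact Finset.sum_congr rfl fun P _ => (Nat.card_eq_fintype_card).symm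
  have hdom : Nat.card (ZMod m × (Fin k ↪ Fin n)) = m * n.descFactorial k := by
    rw [Nat.card_prod, Nat.card_eq_fintype_card, Nat.card_eq_fintype_card, ZMod.card,
      Fintype.card_embedding_eq, Fintype.card_fin, Fintype.card_fin]
  calc 2 * Nat.card {P : Fin n → Option (ZMod m) // IsPattern k P}
      = ∑ _P : {P : Fin n → Option (ZMod m) // IsPattern k P}, 2 := by
        rw [Finset.sum_const, Finset.card_univ, smul_eq_mul, mul_comm,
          Nat.card_eq_fintype_card]
    _ = ∑ P : {P : Fin n → Option (ZMod m) // IsPattern k P},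
        Nat.card {x : ZMod m × (Fin k ↪ Fin n) // Φ x = P} :=
        (Finset.sum_congr rfl fun P _ => (hfib P).symm)
    _ = m * n.descFactorial k := hsig.symm.trans hdom
end

section
/- Fix natural numbers n, m, k with 2 ≤ k ≤ n ≤ m. Then twice the number of matches between samples and k-patterns equals (n!/(n-k)!) · m^(n-k+1); that is, 2 · |{(f, P) : f is a sample, P is a k-pattern, and f matches P}| = (n!/(n-k)!) · m^(n-k+1). -/
/-- A sample `f` matches a partial assignment `P` when `f i = c'`
whenever `P i = some c'`. -/
def Matches {n m : ℕ} (f : Fin n → ZMod m) (P : Fin n → Option (ZMod m)) : Prop :=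
  ∀ i : Fin n, ∀ c' : ZMod m, P i = some c' → f i = c'

namespace Stmt7Aux

variable {n m k : ℕ}

noncomputable def Ppat (m : ℕ) {n k : ℕ} (e : Fin k ↪ Fin n) (c : ZMod m) (i : Fin n) :
    Option (ZMod m) :=
  if hi : ∃ j, e j = i then some (c + ((hi.choose.val - 1 : ℕ) : ZMod m)) else none

noncomputable def fpat {m n k : ℕ} (e : Fin k ↪ Fin n) (c : ZMod m)
    (h : {i : Fin n // ¬ ∃ j, e j = i} → ZMod m) (i : Fin n) : ZMod m :=
  if hi : ∃ j, e j = i then c + ((hi.choose.val - 1 : ℕ) : ZMod m) else h ⟨i, hi⟩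

lemma Ppat_apply (e : Fin k ↪ Fin n) (c : ZMod m) (j : Fin k) :
    Ppat m e c (e j) = some (c + ((j.val - 1 : ℕ) : ZMod m)) := by
  have hi : ∃ j', e j' = e j := ⟨j, rfl⟩
  have hj : hi.choose = j := e.injective hi.choose_spec
  rw [Ppat, dif_pos hi, hj]

lemma Ppat_none (e : Fin k ↪ Fin n) (c : ZMod m) (i : Fin n) (hi : ¬ ∃ j, e j = i) :
    Ppat m e c i = none := by rw [Ppat, dif_neg hi]

lemma fpat_apply (e : Fin k ↪ Fin n) (c : ZMod m) (h : {i : Fin n // ¬ ∃ j, e j = i} → ZMod m)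
    (j : Fin k) : fpat e c h (e j) = c + ((j.val - 1 : ℕ) : ZMod m) := by
  have hi : ∃ j', e j' = e j := ⟨j, rfl⟩
  have hj : hi.choose = j := e.injective hi.choose_spec
  rw [fpat, dif_pos hi, hj]

lemma fpat_none (e : Fin k ↪ Fin n) (c : ZMod m) (h : {i : Fin n // ¬ ∃ j, e j = i} → ZMod m)
    (i : Fin n) (hi : ¬ ∃ j, e j = i) : fpat e c h i = h ⟨i, hi⟩ := by
  rw [fpat, dif_neg hi]

lemma cast_inj_of_lt (hm : 2 ≤ m) {a b : ℕ} (ha : a < m) (hb : b < m)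
    (h : (a : ZMod m) = b) : a = b := by
  haveI : NeZero m := ⟨by omega⟩
  have := congrArg ZMod.val h
  rwa [ZMod.val_cast_of_lt ha, ZMod.val_cast_of_lt hb] at this

lemma add_cast_inj (hm : 2 ≤ m) {c : ZMod m} {a b : ℕ} (ha : a < m) (hb : b < m)
    (h : c + (a : ZMod m) = c + b) : a = b :=
  cast_inj_of_lt hm ha hb (add_left_cancel h)

lemma Ppat_eq_some_iff (hm : 2 ≤ m)
    (e : Fin k ↪ Fin n) (c : ZMod m) (i : Fin n) {t : ℕ} (ht : t < m) (hkm : k ≤ m) :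
    Ppat m e c i = some (c + (t : ZMod m)) ↔ ∃ j : Fin k, e j = i ∧ j.val - 1 = t := by
  constructor
  · intro h
    rw [Ppat] at h
    split_ifs at h with hi
    · refine ⟨hi.choose, hi.choose_spec, ?_⟩
      have hb : hi.choose.val - 1 < m := by
        have := hi.choose.isLt; omega
      exact add_cast_inj hm hb ht (by injection h)
  · rintro ⟨j, rfl, hj⟩
    rw [Ppat_apply, hj]

lemma natCard_eq_two {α : Type*} {p : α → Prop} {a b : α} (hab : a ≠ b)
    (h : ∀ i, p i ↔ i = a ∨ i = b) : Nat.card {i // p i} = 2 := by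
  rw [Nat.card_eq_two_iff]
  refine ⟨⟨a, (h a).2 (Or.inl rfl)⟩, ⟨b, (h b).2 (Or.inr rfl)⟩,
    by simp [Subtype.ext_iff, hab], ?_⟩
  rw [Set.eq_univ_iff_forall]
  rintro ⟨i, hi⟩
  rcases (h i).1 hi with h' | h' <;> simp [Subtype.ext_iff, h']

lemma natCard_eq_one {α : Type*} {p : α → Prop} {a : α}
    (h : ∀ i, p i ↔ i = a) : Nat.card {i // p i} = 1 := by
  rw [Nat.card_eq_one_iff_exists]
  exact ⟨⟨a, (h a).2 rfl⟩, fun y => Subtype.ext ((h y.1).1 y.2)⟩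

lemma isPattern_Ppat (hk : 2 ≤ k) (hkn : k ≤ n) (hnm : n ≤ m)
    (e : Fin k ↪ Fin n) (c : ZMod m) : IsPattern k (Ppat m e c) := by
  have hm : 2 ≤ m := by omega
  refine ⟨c, ?_, ?_, ?_⟩
  · refine natCard_eq_two (a := e ⟨0, by omega⟩) (b := e ⟨1, by omega⟩)
      (e.injective.ne (by simp [Fin.ext_iff])) (fun i => ?_)
    have h0 : Ppat m e c i = some c ↔ Ppat m e c i = some (c + ((0 : ℕ) : ZMod m)) := by
      norm_num
    rw [h0, Ppat_eq_some_iff hm e c i (by omega) (by omega)]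
    constructor
    · rintro ⟨j, rfl, hj⟩
      have : j = (⟨0, by omega⟩ : Fin k) ∨ j = ⟨1, by omega⟩ := by
        rcases j with ⟨jv, hjv⟩
        have hj' : jv - 1 = 0 := hj
        simp only [Fin.ext_iff]
        omega
      rcases this with h | h <;> [left; right] <;> rw [h]
    · rintro (h | h) <;> rw [h] <;> exact ⟨_, rfl, by simp⟩
  · intro j hj1 hj2
    refine natCard_eq_one (a := e ⟨j + 1, by omega⟩) (fun i => ?_)
    rw [Ppat_eq_some_iff hm e c i (by omega) (by omega)]
    constructor
    · rintro ⟨j', rfl, hj'⟩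
      have : j' = (⟨j + 1, by omega⟩ : Fin k) := by
        rcases j' with ⟨jv, hjv⟩
        have hj'' : jv - 1 = j := hj'
        simp only [Fin.ext_iff]
        omega
      rw [this]
    · rintro rfl
      exact ⟨⟨j + 1, by omega⟩, rfl, show j + 1 - 1 = j from rfl⟩
  · intro i c' hc'
    rw [Ppat] at hc'
    split_ifs at hc' with hi
    · refine ⟨hi.choose.val - 1, by have := hi.choose.isLt; omega, ?_⟩
      injection hc' with h
      exact h.symm

lemma matches_fpat (e : Fin k ↪ Fin n) (c : ZMod m)
    (h : {i : Fin n // ¬ ∃ j, e j = i} → ZMod m) : Matches (fpat e c h) (Ppat m e c) := by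
  intro i c' hc'
  rw [Ppat] at hc'
  split_ifs at hc' with hi
  · injection hc' with hc'
    rw [fpat, dif_pos hi, hc']

end Stmt7Aux

namespace Stmt7Aux
variable {n m k : ℕ}

/-- the enumeration function built from two players `a b` at the double chair and
`w j'` at chair `c + j'`. -/
def gfun (k : ℕ) {n : ℕ} (a b : Fin n) (w : ℕ → Fin n) : Fin k → Fin n :=
  fun j => if j.val = 0 then a else if j.val = 1 then b else w (j.val - 1)

lemma exists_preimage (hk : 2 ≤ k) (hkn : k ≤ n) (hnm : n ≤ m)
    {f : Fin n → ZMod m} {P : Fin n → Option (ZMod m)}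
    (h1 : IsPattern k P) (h2 : Matches f P) :
    ∃ (e : Fin k ↪ Fin n) (c : ZMod m) (h : {i : Fin n // ¬ ∃ j, e j = i} → ZMod m),
      fpat e c h = f ∧ Ppat m e c = P := by
  have hm : 2 ≤ m := by omega
  obtain ⟨c, hc2, hc1, hc0⟩ := h1
  rw [Nat.card_eq_two_iff] at hc2
  obtain ⟨⟨a, ha⟩, ⟨b, hb⟩, hab, huniv⟩ := hc2
  have hab' : a ≠ b := fun h => hab (Subtype.ext h)
  have hcov : ∀ i, P i = some c → i = a ∨ i = b := by
    intro i hi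
    have := huniv ▸ Set.mem_univ (⟨i, hi⟩ : {x : Fin n // P x = some c})
    simpa [Subtype.ext_iff] using this
  have hsing : ∀ j : ℕ, ∃ x : Fin n, 1 ≤ j → j ≤ k - 2 →
      (P x = some (c + (j : ZMod m)) ∧ ∀ y, P y = some (c + (j : ZMod m)) → y = x) := by
    intro j
    by_cases hj : 1 ≤ j ∧ j ≤ k - 2
    · have := hc1 j hj.1 hj.2
      rw [Nat.card_eq_one_iff_exists] at this
      obtain ⟨⟨x, hx⟩, hux⟩ := this
      exact ⟨x, fun _ _ => ⟨hx, fun y hy => congrArg Subtype.val (hux ⟨y, hy⟩)⟩⟩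
    · exact ⟨a, fun h1' h2' => absurd ⟨h1', h2'⟩ hj⟩
  choose w hw using hsing
  set g : Fin k → Fin n := gfun k a b w with hg
  have hg0 : ∀ j : Fin k, j.val = 0 → g j = a := by
    intro j hj; rw [hg, gfun, if_pos hj]
  have hg1 : ∀ j : Fin k, j.val = 1 → g j = b := by
    intro j hj; rw [hg, gfun, if_neg (by omega), if_pos hj]
  have hg2 : ∀ j : Fin k, 2 ≤ j.val → g j = w (j.val - 1) := by
    intro j hj; rw [hg, gfun, if_neg (by omega), if_neg (by omega)]
  have key : ∀ j : Fin k, P (g j) = some (c + ((j.val - 1 : ℕ) : ZMod m)) := by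
    intro j
    rcases Nat.lt_or_ge j.val 2 with hj | hj
    · have hj1 : j.val - 1 = 0 := by omega
      rw [hj1]
      interval_cases h : j.val
      · rw [hg0 j h]; simpa using ha
      · rw [hg1 j h]; simpa using hb
    · have hbound : 1 ≤ j.val - 1 ∧ j.val - 1 ≤ k - 2 := by have := j.isLt; omega
      rw [hg2 j hj]
      exact (hw (j.val - 1) hbound.1 hbound.2).1
  have ginj : Function.Injective g := by
    intro j1 j2 hgg
    have h1' := key j1
    rw [hgg, key j2] at h1'
    injection h1' with h1'
    have hvals : j1.val - 1 = j2.val - 1 := by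
      refine add_cast_inj hm ?_ ?_ h1'.symm <;> · have := Fin.isLt j1; have := Fin.isLt j2; omega
    by_cases hj1 : j1.val ≤ 1
    · by_cases hj2 : j2.val ≤ 1
      · rcases Nat.lt_or_ge j1.val 1 with h' | h' <;> rcases Nat.lt_or_ge j2.val 1 with h'' | h''
        · exact Fin.ext (by omega)
        · exfalso; rw [hg0 j1 (by omega), hg1 j2 (by omega)] at hgg; exact hab' hgg
        · exfalso; rw [hg1 j1 (by omega), hg0 j2 (by omega)] at hgg; exact hab' hgg.symm
        · exact Fin.ext (by omega)
      · omega
    · by_cases hj2 : j2.val ≤ 1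
      · omega
      · exact Fin.ext (by omega)
  refine ⟨⟨g, ginj⟩, c, fun x => f x.1, ?_, ?_⟩
  · funext i
    by_cases hi : ∃ j : Fin k, g j = i
    · obtain ⟨j, rfl⟩ := hi
      exact (fpat_apply ⟨g, ginj⟩ c (fun x => f x.1) j).trans (h2 (g j) _ (key j)).symm
    · exact fpat_none _ _ _ i hi
  · funext i
    by_cases hi : ∃ j : Fin k, g j = i
    · obtain ⟨j, rfl⟩ := hi
      exact (Ppat_apply ⟨g, ginj⟩ c j).trans (key j).symm
    · rw [Ppat_none _ _ _ hi]
      rcases hP : P i with _ | c'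
      · rfl
      · exfalso
        obtain ⟨j', hj', hcj'⟩ := hc0 i c' hP
        rcases Nat.eq_zero_or_pos j' with h0 | h0
        · subst h0
          have : P i = some c := by rw [hP, hcj']; norm_num
          rcases hcov i this with rfl | rfl
          · exact hi ⟨⟨0, by omega⟩, hg0 _ rfl⟩
          · exact hi ⟨⟨1, by omega⟩, hg1 _ rfl⟩
        · have := (hw j' h0 hj').2 i (by rw [hP, hcj'])
          refine hi ⟨⟨j' + 1, by omega⟩, ?_⟩
          rw [hg2 _ (Nat.succ_le_succ h0), this]
          rfl

end Stmt7Aux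

namespace Stmt7Aux
variable {n m k : ℕ}

abbrev S (n m k : ℕ) : Type :=
  Σ e : Fin k ↪ Fin n, ZMod m × ({i : Fin n // ¬ ∃ j, e j = i} → ZMod m)

lemma Ppat_eq_some (e : Fin k ↪ Fin n) (c d : ZMod m) (i : Fin n)
    (h : Ppat m e c i = some d) :
    ∃ j, e j = i ∧ d = c + ((j.val - 1 : ℕ) : ZMod m) := by
  rw [Ppat] at h
  split_ifs at h with hi
  exact ⟨hi.choose, hi.choose_spec, (Option.some.inj h).symm⟩

lemma S_ext {s s' : S n m k}
    (h1 : ∀ j, s.1 j = s'.1 j) (h2 : s.2.1 = s'.2.1)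
    (h3 : ∀ i hi hi', s.2.2 ⟨i, hi⟩ = s'.2.2 ⟨i, hi'⟩) : s = s' := by
  obtain ⟨e, c, h⟩ := s
  obtain ⟨e', c', h'⟩ := s'
  obtain rfl : e = e' := DFunLike.ext _ _ h1
  obtain rfl : c = c' := h2
  have : h = h' := funext fun x => by obtain ⟨i, hi⟩ := x; exact h3 i hi hi
  rw [this]

def sw (hk : 2 ≤ k) (s : S n m k) : S n m k :=
  ⟨((Equiv.swap (⟨0, by omega⟩ : Fin k) ⟨1, by omega⟩).toEmbedding).trans s.1, s.2.1,
   fun i => s.2.2 ⟨i.1, fun hj => i.2 (by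
      obtain ⟨j, hj'⟩ := hj
      refine ⟨Equiv.swap (⟨0, by omega⟩ : Fin k) ⟨1, by omega⟩ j, ?_⟩
      simp [Function.Embedding.trans_apply, Equiv.swap_apply_self, hj'])⟩⟩

lemma swap_val_sub_one (hk : 2 ≤ k) (j : Fin k) :
    ((Equiv.swap (⟨0, by omega⟩ : Fin k) ⟨1, by omega⟩ j).val - 1) = j.val - 1 := by
  rcases eq_or_ne j ⟨0, by omega⟩ with rfl | h0
  · rw [Equiv.swap_apply_left]
    rfl
  · rcases eq_or_ne j ⟨1, by omega⟩ with rfl | h1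
    · rw [Equiv.swap_apply_right]
      rfl
    · rw [Equiv.swap_apply_of_ne_of_ne h0 h1]

lemma Phi_sw_P (hk : 2 ≤ k) (s : S n m k) :
    Ppat m (sw hk s).1 (sw hk s).2.1 = Ppat m s.1 s.2.1 := by
  obtain ⟨e, c, h⟩ := s
  set τ : Equiv.Perm (Fin k) := Equiv.swap (⟨0, by omega⟩ : Fin k) ⟨1, by omega⟩ with hτ
  set e' : Fin k ↪ Fin n := τ.toEmbedding.trans e with he'
  funext i
  show Ppat m e' c i = Ppat m e c i
  by_cases hi : ∃ j, e j = i
  · obtain ⟨j, rfl⟩ := hi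
    have h1 : e' (τ j) = e j := by simp [he', hτ, Equiv.swap_apply_self]
    have h2 : ((τ j).val - 1 : ℕ) = j.val - 1 := swap_val_sub_one hk j
    calc Ppat m e' c (e j) = Ppat m e' c (e' (τ j)) := by rw [h1]
    _ = some (c + (((τ j).val - 1 : ℕ) : ZMod m)) := Ppat_apply e' c (τ j)
    _ = some (c + ((j.val - 1 : ℕ) : ZMod m)) := by rw [h2]
    _ = Ppat m e c (e j) := (Ppat_apply e c j).symm
  · have hi' : ¬ ∃ j, e' j = i := fun ⟨j, hj⟩ => hi ⟨τ j, hj⟩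
    rw [Ppat_none _ _ _ hi', Ppat_none _ _ _ hi]

lemma Phi_sw_f (hk : 2 ≤ k) (s : S n m k) :
    fpat (sw hk s).1 (sw hk s).2.1 (sw hk s).2.2 = fpat s.1 s.2.1 s.2.2 := by
  obtain ⟨e, c, h⟩ := s
  set τ : Equiv.Perm (Fin k) := Equiv.swap (⟨0, by omega⟩ : Fin k) ⟨1, by omega⟩ with hτ
  set e' : Fin k ↪ Fin n := τ.toEmbedding.trans e with he'
  set h' : {i : Fin n // ¬ ∃ j, e' j = i} → ZMod m := (sw hk ⟨e, c, h⟩).2.2 with hh'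
  funext i
  show fpat e' c h' i = fpat e c h i
  by_cases hi : ∃ j, e j = i
  · obtain ⟨j, rfl⟩ := hi
    have h1 : e' (τ j) = e j := by simp [he', hτ, Equiv.swap_apply_self]
    have h2 : ((τ j).val - 1 : ℕ) = j.val - 1 := swap_val_sub_one hk j
    calc fpat e' c h' (e j) = fpat e' c h' (e' (τ j)) := by rw [h1]
    _ = c + (((τ j).val - 1 : ℕ) : ZMod m) := fpat_apply e' c h' (τ j)
    _ = c + ((j.val - 1 : ℕ) : ZMod m) := by rw [h2]
    _ = fpat e c h (e j) := (fpat_apply e c h j).symm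
  · have hi' : ¬ ∃ j, e' j = i := fun ⟨j, hj⟩ => hi ⟨τ j, hj⟩
    rw [fpat_none _ _ _ _ hi', fpat_none _ _ _ _ hi]
    exact congrArg h (Subtype.ext rfl)

lemma sw_ne (hk : 2 ≤ k) (s : S n m k) : sw hk s ≠ s := by
  obtain ⟨e, c, h⟩ := s
  intro hcon
  have := congrArg (fun x : S n m k => x.1 ⟨0, by omega⟩) hcon
  simp only [sw, Function.Embedding.trans_apply, Equiv.coe_toEmbedding,
    Equiv.swap_apply_left] at this
  exact absurd (e.injective this) (by simp [Fin.ext_iff])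

end Stmt7Aux

namespace Stmt7Aux
variable {n m k : ℕ}

lemma sw_ext_first (hk : 2 ≤ k) (e e' : Fin k ↪ Fin n) (c : ZMod m)
    (h : {i : Fin n // ¬ ∃ j, e j = i} → ZMod m)
    (hE0 : e' ⟨0, by omega⟩ = e ⟨1, by omega⟩)
    (hE1 : e' ⟨1, by omega⟩ = e ⟨0, by omega⟩)
    (hB : ∀ j : Fin k, 2 ≤ j.val → e' j = e j) :
    ∀ j, e' j = (sw hk (⟨e, c, h⟩ : S n m k)).1 j := by
  intro j
  show e' j = e (Equiv.swap (⟨0, by omega⟩ : Fin k) ⟨1, by omega⟩ j)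
  rcases eq_or_ne j ⟨0, by omega⟩ with rfl | hne0
  · rw [Equiv.swap_apply_left]; exact hE0
  · rcases eq_or_ne j ⟨1, by omega⟩ with rfl | hne1
    · rw [Equiv.swap_apply_right]; exact hE1
    · rw [Equiv.swap_apply_of_ne_of_ne hne0 hne1]
      refine hB j ?_
      have hv0 : j.val ≠ 0 := fun hh => hne0 (Fin.ext hh)
      have hv1 : j.val ≠ 1 := fun hh => hne1 (Fin.ext hh)
      have := j.isLt
      omega

set_option maxHeartbeats 1000000 in
lemma fiber_classify (hk : 2 ≤ k) (hkn : k ≤ n) (hnm : n ≤ m)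
    (e e' : Fin k ↪ Fin n) (c c' : ZMod m)
    (h : {i : Fin n // ¬ ∃ j, e j = i} → ZMod m)
    (h' : {i : Fin n // ¬ ∃ j, e' j = i} → ZMod m)
    (hP : Ppat m e' c' = Ppat m e c) (hf : fpat e' c' h' = fpat e c h) :
    (⟨e', c', h'⟩ : S n m k) = ⟨e, c, h⟩ ∨ (⟨e', c', h'⟩ : S n m k) = sw hk ⟨e, c, h⟩ := by
  have hm : 2 ≤ m := by omega
  have hA0 : Ppat m e c (e' ⟨0, by omega⟩) =
      some (c' + (((⟨0, by omega⟩ : Fin k).val - 1 : ℕ) : ZMod m)) := by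
    rw [← hP]; exact Ppat_apply e' c' _
  have hA1 : Ppat m e c (e' ⟨1, by omega⟩) =
      some (c' + (((⟨1, by omega⟩ : Fin k).val - 1 : ℕ) : ZMod m)) := by
    rw [← hP]; exact Ppat_apply e' c' _
  obtain ⟨ja, hja, hca⟩ := Ppat_eq_some _ _ _ _ hA0
  obtain ⟨jb, hjb, hcb⟩ := Ppat_eq_some _ _ _ _ hA1
  have h00 : (((⟨0, by omega⟩ : Fin k).val - 1 : ℕ) : ZMod m) = 0 := by norm_num
  have h11 : (((⟨1, by omega⟩ : Fin k).val - 1 : ℕ) : ZMod m) = 0 := by norm_num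
  rw [h00, add_zero] at hca
  rw [h11, add_zero] at hcb
  have hne : ja ≠ jb := by
    rintro rfl
    have : e' ⟨0, by omega⟩ = e' ⟨1, by omega⟩ := hja.symm.trans hjb
    exact absurd (e'.injective this) (by simp [Fin.ext_iff])
  have hveq : ja.val - 1 = jb.val - 1 :=
    add_cast_inj hm (by have := ja.isLt; omega) (by have := jb.isLt; omega)
      (hca.symm.trans hcb)
  have hvne : ja.val ≠ jb.val := fun hh => hne (Fin.ext hh)
  have hlea : ja.val ≤ 1 := by omega
  have hleb : jb.val ≤ 1 := by omega
  have hc'c : c' = c := by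
    rw [hca, show ja.val - 1 = 0 by omega]; norm_num
  rw [hc'c] at hP hf
  have hB : ∀ j : Fin k, 2 ≤ j.val → e' j = e j := by
    intro j hj
    have hA : Ppat m e c (e' j) = some (c + ((j.val - 1 : ℕ) : ZMod m)) := by
      rw [← hP]; exact Ppat_apply e' c j
    obtain ⟨jj, hjj, hcc⟩ := Ppat_eq_some _ _ _ _ hA
    have hv : j.val - 1 = jj.val - 1 :=
      add_cast_inj hm (by have := j.isLt; omega) (by have := jj.isLt; omega) hcc
    have : jj = j := Fin.ext (by omega)
    rw [this] at hjj
    exact hjj.symm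
  rcases (show ja.val = 0 ∨ ja.val = 1 by omega) with hja0 | hja1
  · -- identity case
    have hjb1 : jb.val = 1 := by omega
    have hE0 : e' ⟨0, by omega⟩ = e ⟨0, by omega⟩ := by
      rw [← hja]; exact congrArg e (Fin.ext hja0.symm).symm
    have hE1 : e' ⟨1, by omega⟩ = e ⟨1, by omega⟩ := by
      rw [← hjb]; exact congrArg e (Fin.ext hjb1.symm).symm
    left
    apply S_ext
    · intro j
      show e' j = e j
      rcases Nat.lt_or_ge j.val 2 with hj | hj
      · rcases (show j.val = 0 ∨ j.val = 1 by omega) with h0 | h1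
        · have : j = ⟨0, by omega⟩ := Fin.ext h0
          rw [this]; exact hE0
        · have : j = ⟨1, by omega⟩ := Fin.ext h1
          rw [this]; exact hE1
      · exact hB j hj
    · exact hc'c
    · intro i hi hi'
      have hfi := congrFun hf i
      rw [fpat_none e' c h' i hi, fpat_none e c h i hi'] at hfi
      exact hfi
  · -- swap case
    have hjb0 : jb.val = 0 := by omega
    have hE0 : e' ⟨0, by omega⟩ = e ⟨1, by omega⟩ := by
      rw [← hja]; exact congrArg e (Fin.ext hja1.symm).symm
    have hE1 : e' ⟨1, by omega⟩ = e ⟨0, by omega⟩ := by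
      rw [← hjb]; exact congrArg e (Fin.ext hjb0.symm).symm
    right
    apply S_ext
    · exact sw_ext_first hk e e' c h hE0 hE1 hB
    · exact hc'c
    · intro i hi hi'
      have hi2 : ¬ ∃ j, e j = i := by
        rintro ⟨j, hj⟩
        refine hi' ⟨Equiv.swap (⟨0, by omega⟩ : Fin k) ⟨1, by omega⟩ j, ?_⟩
        show e (Equiv.swap (⟨0, by omega⟩ : Fin k) ⟨1, by omega⟩
          (Equiv.swap (⟨0, by omega⟩ : Fin k) ⟨1, by omega⟩ j)) = i
        rw [Equiv.swap_apply_self]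
        exact hj
      have hfi := congrFun hf i
      rw [fpat_none e' c h' i hi, fpat_none e c h i hi2] at hfi
      exact hfi.trans (congrArg h (Subtype.ext rfl))

end Stmt7Aux

namespace Stmt7Aux
variable {n m k : ℕ}

noncomputable def Phi (hk : 2 ≤ k) (hkn : k ≤ n) (hnm : n ≤ m) :
    S n m k → {fP : (Fin n → ZMod m) × (Fin n → Option (ZMod m)) //
      IsPattern k fP.2 ∧ Matches fP.1 fP.2} :=
  fun s => ⟨(fpat s.1 s.2.1 s.2.2, Ppat m s.1 s.2.1),
    isPattern_Ppat hk hkn hnm s.1 s.2.1, matches_fpat s.1 s.2.1 s.2.2⟩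

lemma fiber_card (hk : 2 ≤ k) (hkn : k ≤ n) (hnm : n ≤ m)
    (t : {fP : (Fin n → ZMod m) × (Fin n → Option (ZMod m)) //
      IsPattern k fP.2 ∧ Matches fP.1 fP.2}) :
    Nat.card {s : S n m k // Phi hk hkn hnm s = t} = 2 := by
  obtain ⟨⟨f, P⟩, hPat, hMat⟩ := t
  obtain ⟨e, c, h, hfe, hPe⟩ := exists_preimage hk hkn hnm hPat hMat
  have hmem : Phi hk hkn hnm ⟨e, c, h⟩ = ⟨(f, P), hPat, hMat⟩ :=
    Subtype.ext (Prod.ext hfe hPe)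
  have hmem2 : Phi hk hkn hnm (sw hk ⟨e, c, h⟩) = ⟨(f, P), hPat, hMat⟩ := by
    refine Subtype.ext (Prod.ext ?_ ?_)
    · exact (Phi_sw_f hk ⟨e, c, h⟩).trans hfe
    · exact (Phi_sw_P hk ⟨e, c, h⟩).trans hPe
  rw [Nat.card_eq_two_iff]
  refine ⟨⟨⟨e, c, h⟩, hmem⟩, ⟨sw hk ⟨e, c, h⟩, hmem2⟩, ?_, ?_⟩
  · intro hcon
    exact sw_ne hk ⟨e, c, h⟩ (congrArg Subtype.val hcon).symm
  · rw [Set.eq_univ_iff_forall]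
    rintro ⟨⟨e', c', h'⟩, hs'⟩
    have heq := hs'.trans hmem.symm
    have h1 : Ppat m e' c' = Ppat m e c := congrArg (fun x => x.1.2) heq
    have h2 : fpat e' c' h' = fpat e c h := congrArg (fun x => x.1.1) heq
    rcases fiber_classify hk hkn hnm e e' c c' h h' h1 h2 with hcase | hcase <;>
      simp [Subtype.ext_iff, hcase]

lemma card_S (hk : 2 ≤ k) (hkn : k ≤ n) (hnm : n ≤ m) :
    Nat.card (S n m k) = n.descFactorial k * m ^ (n - k + 1) := by
  haveI : NeZero m := ⟨by omega⟩
  rw [Nat.card_eq_fintype_card, Fintype.card_sigma]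
  have hcompl : ∀ e : Fin k ↪ Fin n, Fintype.card {i : Fin n // ¬ ∃ j, e j = i} = n - k := by
    intro e
    rw [Fintype.card_subtype_compl]
    have : Fintype.card {i : Fin n // ∃ j, e j = i} = k := by
      have e2 : {i : Fin n // ∃ j, e j = i} ≃ Fin k := (Equiv.ofInjective e e.injective).symm
      rw [Fintype.card_congr e2, Fintype.card_fin]
    rw [this, Fintype.card_fin]
  have hsummand : ∀ e : Fin k ↪ Fin n,
      Fintype.card (ZMod m × ({i : Fin n // ¬ ∃ j, e j = i} → ZMod m)) = m ^ (n - k + 1) := by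
    intro e
    rw [Fintype.card_prod, Fintype.card_fun, hcompl e, ZMod.card, pow_succ, mul_comm]
  calc (∑ e : Fin k ↪ Fin n,
        Fintype.card (ZMod m × ({i : Fin n // ¬ ∃ j, e j = i} → ZMod m)))
      = ∑ _e : Fin k ↪ Fin n, m ^ (n - k + 1) := by
        exact Finset.sum_congr rfl (fun e _ => hsummand e)
    _ = Fintype.card (Fin k ↪ Fin n) * m ^ (n - k + 1) := by
        rw [Finset.sum_const, smul_eq_mul, Finset.card_univ]
    _ = n.descFactorial k * m ^ (n - k + 1) := by
        rw [Fintype.card_embedding_eq, Fintype.card_fin, Fintype.card_fin]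

end Stmt7Aux

theorem stmt7 (n m k : ℕ) (hk : 2 ≤ k) (hkn : k ≤ n) (hnm : n ≤ m) :
    2 * Nat.card {fP : (Fin n → ZMod m) × (Fin n → Option (ZMod m)) //
        IsPattern k fP.2 ∧ Matches fP.1 fP.2} =
      n.descFactorial k * m ^ (n - k + 1) := by
  classical
  haveI : NeZero m := ⟨by omega⟩
  have hfib := Stmt7Aux.fiber_card hk hkn hnm
  have hequiv : ∀ t, Nonempty ({s : Stmt7Aux.S n m k // Stmt7Aux.Phi hk hkn hnm s = t} ≃ Bool) := by
    intro t
    rw [← Finite.card_eq]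
    rw [hfib t, Nat.card_eq_fintype_card, Fintype.card_bool]
  have E : Stmt7Aux.S n m k ≃ _ × Bool :=
    (Equiv.sigmaFiberEquiv (Stmt7Aux.Phi hk hkn hnm)).symm.trans
      ((Equiv.sigmaCongrRight (fun t => (hequiv t).some)).trans (Equiv.sigmaEquivProd _ Bool))
  have hS := Stmt7Aux.card_S hk hkn hnm
  rw [Nat.card_congr E, Nat.card_prod, Nat.card_eq_fintype_card (α := Bool),
    Fintype.card_bool, mul_comm] at hS
  rw [← hS]
end

section
/- Fix natural numbers n and m with 2 ≤ n ≤ m. Then twice the total number of matches between samples and k-patterns, over all k with 2 ≤ k ≤ n, equals ∑_{k=2}^{n} (n!/(n-k)!) · m^(n-k+1); that is, 2 · |{(f, k, P) : 2 ≤ k ≤ n, P is a k-pattern, and the sample f matches P}| = ∑_{k=2}^{n} (n!/(n-k)!) · m^(n-k+1). -/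
namespace Stmt8Aux

lemma cast_inj_of_lt {m a b : ℕ} (ha : a < m) (hb : b < m) (h : (a : ZMod m) = b) : a = b := by
  haveI : NeZero m := ⟨by omega⟩
  have h1 := ZMod.val_cast_of_lt ha
  have h2 := ZMod.val_cast_of_lt hb
  rw [← h1, ← h2, h]

/-- The "ordered pattern with sample" type. -/
def Tk (n m k : ℕ) : Type :=
  Σ _c : ZMod m, Σ e : Fin k ↪ Fin n,
    {f : Fin n → ZMod m // ∀ j : Fin k, f (e j) = _c + ((j.1 - 1 : ℕ) : ZMod m)}

/-- The match type for a fixed `k`. -/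
def Sk (n m k : ℕ) : Type :=
  {fp : (Fin n → ZMod m) × (Fin n → Option (ZMod m)) //
    IsPattern k fp.2 ∧ Matches fp.1 fp.2}

/-- The pattern induced by an embedding and a sample. -/
def patOf {n m k : ℕ} (e : Fin k ↪ Fin n) (f : Fin n → ZMod m) :
    Fin n → Option (ZMod m) :=
  fun i => if _ : ∃ j, e j = i then some (f i) else none

lemma ncard_sigma {ι : Type*} [Fintype ι] (α : ι → Type*) [∀ i, Finite (α i)] :
    Nat.card (Σ i, α i) = ∑ i, Nat.card (α i) := by
  letI : ∀ i, Fintype (α i) := fun i => Fintype.ofFinite _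
  simp [Nat.card_eq_fintype_card, Fintype.card_sigma]

lemma card_ext {n k : ℕ} {X : Type*} [Fintype X] (_hk : k ≤ n)
    (e : Fin k ↪ Fin n) (v : Fin k → X) :
    Nat.card {f : Fin n → X // ∀ j, f (e j) = v j} = (Fintype.card X) ^ (n - k) := by
  classical
  have hbij : Function.Bijective
      (fun (f : {f : Fin n → X // ∀ j, f (e j) = v j})
        (i : {i : Fin n // ¬ ∃ j, e j = i}) => f.1 i.1) := by
    constructor
    · intro f g hfg
      apply Subtype.ext; funext i
      by_cases h : ∃ j, e j = i
      · obtain ⟨j, rfl⟩ := h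
        rw [f.2, g.2]
      · exact congrFun hfg ⟨i, h⟩
    · intro g
      refine ⟨⟨fun i => if h : ∃ j, e j = i then v h.choose else g ⟨i, h⟩, ?_⟩, ?_⟩
      · intro j
        have hj : ∃ j', e j' = e j := ⟨j, rfl⟩
        simp only [dif_pos hj]
        congr 1
        exact e.injective hj.choose_spec
      · funext i
        simp only [dif_neg i.2]
  have hr : Nat.card {i : Fin n // ∃ j, e j = i} = k := by
    have h := Nat.card_range_of_injective e.injective
    rw [Nat.card_eq_fintype_card (α := Fin k), Fintype.card_fin] at h
    exact h
  have h1 : Nat.card {i : Fin n // ¬ ∃ j, e j = i} = n - k := by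
    rw [Nat.card_eq_fintype_card, Fintype.card_subtype_compl, Fintype.card_fin,
      ← Nat.card_eq_fintype_card, hr]
  rw [Nat.card_congr (Equiv.ofBijective _ hbij), Nat.card_fun, h1, Nat.card_eq_fintype_card]

lemma card_Tk {n m k : ℕ} (h1 : 2 ≤ k) (hk : k ≤ n) (hm : n ≤ m) :
    Nat.card (Tk n m k) = m * (n.descFactorial k * m ^ (n - k)) := by
  haveI : NeZero m := ⟨by omega⟩
  rw [Tk, ncard_sigma]
  have he : ∀ c : ZMod m,
      Nat.card (Σ e : Fin k ↪ Fin n,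
        {f : Fin n → ZMod m // ∀ j : Fin k, f (e j) = c + ((j.1 - 1 : ℕ) : ZMod m)}) =
      n.descFactorial k * m ^ (n - k) := by
    intro c
    rw [ncard_sigma]
    have : ∀ e : Fin k ↪ Fin n,
        Nat.card {f : Fin n → ZMod m // ∀ j : Fin k, f (e j) = c + ((j.1 - 1 : ℕ) : ZMod m)}
        = m ^ (n - k) := by
      intro e
      rw [card_ext hk e _, ZMod.card]
    simp only [this, Finset.sum_const, Finset.card_univ, smul_eq_mul]
    congr 1
    rw [Fintype.card_embedding_eq, Fintype.card_fin, Fintype.card_fin]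
  simp only [he, Finset.sum_const, Finset.card_univ, smul_eq_mul, ZMod.card]

end Stmt8Aux

namespace Stmt8Aux

lemma patOf_eq_some_iff {n m k : ℕ} (e : Fin k ↪ Fin n) (f : Fin n → ZMod m)
    {i : Fin n} {c' : ZMod m} :
    patOf e f i = some c' ↔ (∃ j, e j = i) ∧ f i = c' := by
  unfold patOf
  by_cases h : ∃ j, e j = i <;> simp [h]

lemma matches_patOf {n m k : ℕ} (e : Fin k ↪ Fin n) (f : Fin n → ZMod m) :
    Matches f (patOf e f) := by
  intro i c' h
  exact ((patOf_eq_some_iff e f).mp h).2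

lemma isPattern_patOf {n m k : ℕ} (h1 : 2 ≤ k) (hk : k ≤ n) (hm : n ≤ m)
    (c : ZMod m) (e : Fin k ↪ Fin n) (f : Fin n → ZMod m)
    (hf : ∀ j : Fin k, f (e j) = c + ((j.1 - 1 : ℕ) : ZMod m)) :
    IsPattern k (patOf e f) := by
  have hcast : ∀ a b : ℕ, a < k → b < k → ((a : ZMod m) = (b : ZMod m)) → a = b :=
    fun a b ha hb h => cast_inj_of_lt (by omega) (by omega) h
  set z : Fin k := ⟨0, by omega⟩ with hzdef
  set o : Fin k := ⟨1, by omega⟩ with hodef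
  have hz1 : z.1 = 0 := rfl
  have ho1 : o.1 = 1 := rfl
  have hfz : f (e z) = c := by simpa [hz1] using hf z
  have hfo : f (e o) = c := by simpa [ho1] using hf o
  have hzo : e z ≠ e o := by
    intro h
    have := e.injective h
    simp [hzdef, hodef, Fin.ext_iff] at this
  refine ⟨c, ?_, ?_, ?_⟩
  · rw [Nat.card_eq_two_iff]
    refine ⟨⟨e z, ?_⟩, ⟨e o, ?_⟩, ?_, ?_⟩
    · rw [patOf_eq_some_iff]; exact ⟨⟨z, rfl⟩, hfz⟩
    · rw [patOf_eq_some_iff]; exact ⟨⟨o, rfl⟩, hfo⟩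
    · intro h
      exact hzo (congrArg Subtype.val h)
    · apply Set.eq_univ_iff_forall.mpr
      rintro ⟨i, hi⟩
      rw [patOf_eq_some_iff] at hi
      obtain ⟨⟨j, rfl⟩, hfj⟩ := hi
      have hj : ((j.1 - 1 : ℕ) : ZMod m) = ((0 : ℕ) : ZMod m) := by
        have := hf j
        rw [hfj] at this
        simpa using this.symm
      have hj0 : j.1 - 1 = 0 := hcast _ _ (by omega) (by omega) hj
      have : j = z ∨ j = o := by
        rcases Nat.lt_or_ge j.1 1 with h | h
        · left; exact Fin.ext (by omega)
        · right; exact Fin.ext (by omega)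
      rcases this with rfl | rfl
      · exact Set.mem_insert _ _
      · exact Set.mem_insert_of_mem _ rfl
  · intro j hj1 hj2
    rw [Nat.card_eq_one_iff_exists]
    have hJlt : j + 1 < k := by omega
    refine ⟨⟨e ⟨j + 1, hJlt⟩, ?_⟩, ?_⟩
    · rw [patOf_eq_some_iff]
      refine ⟨⟨_, rfl⟩, ?_⟩
      have := hf ⟨j + 1, hJlt⟩
      simpa using this
    · rintro ⟨i, hi⟩
      rw [patOf_eq_some_iff] at hi
      obtain ⟨⟨j', rfl⟩, hfj'⟩ := hi
      have hj' : ((j'.1 - 1 : ℕ) : ZMod m) = ((j : ℕ) : ZMod m) := by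
        have := hf j'
        rw [hfj'] at this
        exact add_left_cancel ((hf j').symm.trans hfj')
      have hjj : j'.1 - 1 = j := hcast _ _ (by omega) (by omega) hj'
      have : j' = ⟨j + 1, hJlt⟩ := by
        apply Fin.ext
        simp only []
        by_cases h0 : j'.1 = 0
        · omega
        · omega
      exact Subtype.ext (congrArg e this)
  · intro i c' hi
    rw [patOf_eq_some_iff] at hi
    obtain ⟨⟨j, rfl⟩, hfj⟩ := hi
    exact ⟨j.1 - 1, by omega, hfj ▸ hf j⟩

end Stmt8Aux

namespace Stmt8Aux

set_option maxHeartbeats 1000000 in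
lemma two_mul_card_Sk {n m k : ℕ} (h1 : 2 ≤ k) (hk : k ≤ n) (hm : n ≤ m) :
    Nat.card (Tk n m k) = 2 * Nat.card (Sk n m k) := by
  haveI : NeZero m := ⟨by omega⟩
  have hcast : ∀ a b : ℕ, a < k → b < k → ((a : ZMod m) = (b : ZMod m)) → a = b :=
    fun a b ha hb h => cast_inj_of_lt (by omega) (by omega) h
  have hcard : Nat.card (Bool × Sk n m k) = 2 * Nat.card (Sk n m k) := by
    rw [Nat.card_prod, Nat.card_eq_fintype_card (α := Bool), Fintype.card_bool]
  rw [← hcard]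
  set z : Fin k := ⟨0, by omega⟩ with hzdef
  set o : Fin k := ⟨1, by omega⟩ with hodef
  have hz1 : z.1 = 0 := rfl
  have ho1 : o.1 = 1 := rfl
  have hzo : z ≠ o := by simp [hzdef, hodef, Fin.ext_iff]
  set φ : Tk n m k → Bool × Sk n m k := fun x =>
    (decide (x.2.1 z < x.2.1 o),
      ⟨(x.2.2.1, patOf x.2.1 x.2.2.1),
        isPattern_patOf h1 hk hm x.1 x.2.1 x.2.2.1 x.2.2.2,
        matches_patOf x.2.1 x.2.2.1⟩) with hφ
  apply Nat.card_congr (Equiv.ofBijective φ ⟨?_, ?_⟩)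
  · -- injective
    rintro ⟨c, e, f, hf⟩ ⟨c', e', f', hf'⟩ hEq
    have hb : decide (e z < e o) = decide (e' z < e' o) := congrArg Prod.fst hEq
    have hFP : ((f, patOf e f) : (Fin n → ZMod m) × (Fin n → Option (ZMod m)))
        = (f', patOf e' f') := congrArg (fun t => (Prod.snd t).val) hEq
    have hF : f = f' := congrArg Prod.fst hFP
    have hP : patOf e f = patOf e' f' := congrArg Prod.snd hFP
    clear hFP hEq
    subst hF
    have hrange : ∀ i, (∃ j, e j = i) ↔ (∃ j, e' j = i) := by
      intro i
      have hpi := congrFun hP i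
      unfold patOf at hpi
      constructor
      · intro h; by_contra h'; simp [h, h'] at hpi
      · intro h; by_contra h'; simp [h, h'] at hpi
    have hezo : e z ≠ e o := fun h => hzo (e.injective h)
    obtain ⟨j₁, hj₁⟩ := (hrange (e z)).mp ⟨z, rfl⟩
    obtain ⟨j₂, hj₂⟩ := (hrange (e o)).mp ⟨o, rfl⟩
    have hj₁₂ : j₁ ≠ j₂ := by
      intro h; apply hezo; rw [← hj₁, ← hj₂, h]
    have hcz : c + ((z.1 - 1 : ℕ) : ZMod m) = c' + ((j₁.1 - 1 : ℕ) : ZMod m) := by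
      rw [← hf z, ← hj₁, hf' j₁]
    have hco : c + ((o.1 - 1 : ℕ) : ZMod m) = c' + ((j₂.1 - 1 : ℕ) : ZMod m) := by
      rw [← hf o, ← hj₂, hf' j₂]
    simp only [hz1, ho1] at hcz hco
    norm_num at hcz hco
    have hj12v : j₁.1 - 1 = j₂.1 - 1 :=
      hcast _ _ (by omega) (by omega) (add_left_cancel (hcz.symm.trans hco))
    have hj₁₂v : j₁.1 ≠ j₂.1 := fun h => hj₁₂ (Fin.ext h)
    have hj₁0 : j₁.1 - 1 = 0 := by omega
    have hcc : c = c' := by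
      rw [hj₁0] at hcz
      simpa using hcz
    subst hcc
    have he : e = e' := by
      apply DFunLike.ext
      intro j
      obtain ⟨j'', hj''⟩ := (hrange (e j)).mp ⟨j, rfl⟩
      have hch : c + ((j.1 - 1 : ℕ) : ZMod m) = c + ((j''.1 - 1 : ℕ) : ZMod m) := by
        rw [← hf j, ← hj'', hf' j'']
      have hv : j.1 - 1 = j''.1 - 1 :=
        hcast _ _ (by omega) (by omega) (add_left_cancel hch)
      by_cases h2j : 2 ≤ j.1
      · have : j'' = j := Fin.ext (by omega)
        rw [← hj'', this]
      · -- j is z or o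
        have hj10 : j₁.1 = 0 ∨ j₁.1 = 1 := by omega
        have hj20 : j₂.1 - 1 = 0 := by omega
        rcases hj10 with h10 | h10
        · -- j₁ = z, j₂ = o
          have e1 : e' z = e z := by rw [← hj₁]; congr 1; exact (Fin.ext h10.symm)
          have e2 : e' o = e o := by
            rw [← hj₂]; congr 1; exact Fin.ext (by omega)
          rcases (by omega : j.1 = 0 ∨ j.1 = 1) with h | h
          · have : j = z := Fin.ext h
            rw [this, e1]
          · have : j = o := Fin.ext h
            rw [this, e2]
        · -- swapped: contradiction with the Bool
          exfalso
          have e1 : e' o = e z := by rw [← hj₁]; congr 1; exact (Fin.ext h10.symm)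
          have e2 : e' z = e o := by
            rw [← hj₂]; congr 1; exact Fin.ext (by omega)
          have hiff := decide_eq_decide.mp hb
          rw [e1, e2] at hiff
          have hne : (e z).1 ≠ (e o).1 := fun h => hezo (Fin.ext h)
          rw [Fin.lt_def, Fin.lt_def] at hiff
          omega
    clear hP hb hrange hj₁ hj₂ hcz hco
    subst he
    rfl
  · -- surjective
    rintro ⟨b, ⟨⟨f, P⟩, hPat, hM⟩⟩
    obtain ⟨c, hc2, hc1, hall⟩ := hPat
    rw [Nat.card_eq_two_iff] at hc2
    obtain ⟨⟨i₁, hi₁⟩, ⟨i₂, hi₂⟩, hne, huniv⟩ := hc2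
    have hvne : i₁ ≠ i₂ := fun h => hne (Subtype.ext h)
    have hcomplete : ∀ i, P i = some c → i = i₁ ∨ i = i₂ := by
      intro i hi
      have hmem : (⟨i, hi⟩ : {i : Fin n // P i = some c}) ∈
          ({⟨i₁, hi₁⟩, ⟨i₂, hi₂⟩} : Set {i : Fin n // P i = some c}) := by
        rw [huniv]; exact Set.mem_univ _
      simpa [Subtype.ext_iff] using hmem
    have hA : ∀ j : ℕ, 1 ≤ j → j ≤ k - 2 →
        ∃ x : Fin n, P x = some (c + (j : ZMod m)) ∧
          ∀ y : Fin n, P y = some (c + (j : ZMod m)) → y = x := by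
      intro j hj1 hj2
      have h := hc1 j hj1 hj2
      rw [Nat.card_eq_one_iff_exists] at h
      obtain ⟨⟨x, hx⟩, hu⟩ := h
      exact ⟨x, hx, fun y hy => congrArg Subtype.val (hu ⟨y, hy⟩)⟩
    obtain ⟨p, q, hpq, hPp, hPq, hdec, hPQ⟩ :
        ∃ p q : Fin n, p ≠ q ∧ P p = some c ∧ P q = some c ∧ decide (p < q) = b ∧
          (∀ i, P i = some c → i = p ∨ i = q) := by
      by_cases hb : b = decide (i₁ < i₂)
      · exact ⟨i₁, i₂, hvne, hi₁, hi₂, hb.symm, hcomplete⟩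
      · refine ⟨i₂, i₁, hvne.symm, hi₂, hi₁, ?_, fun i hi => (hcomplete i hi).symm⟩
        have hb' : b = !decide (i₁ < i₂) := by
          cases b <;> cases hlt : decide (i₁ < i₂) <;> simp_all
        rw [hb']
        rcases lt_or_gt_of_ne hvne with h | h
        · simp [h, asymm h]
        · simp [h, asymm h]
    set E : Fin k → Fin n := fun j =>
      if h0 : j.1 = 0 then p else if h1 : j.1 = 1 then q
      else (hA (j.1 - 1) (by omega) (by omega)).choose with hEdef
    have hPE : ∀ j : Fin k, P (E j) = some (c + ((j.1 - 1 : ℕ) : ZMod m)) := by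
      intro j
      by_cases h0 : j.1 = 0
      · simp only [hEdef, dif_pos h0, h0]
        simpa using hPp
      · by_cases hh1 : j.1 = 1
        · simp only [hEdef, dif_neg h0, dif_pos hh1, hh1]
          simpa using hPq
        · simp only [hEdef, dif_neg h0, dif_neg hh1]
          exact (hA (j.1 - 1) (by omega) (by omega)).choose_spec.1
    have hEinj : Function.Injective E := by
      intro a b' hab
      have hPa := hPE a
      have hPb := hPE b'
      rw [hab] at hPa
      rw [hPa] at hPb
      have hv : a.1 - 1 = b'.1 - 1 :=
        hcast _ _ (by omega) (by omega) (add_left_cancel (Option.some.inj hPb))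
      rcases (by omega : a.1 = b'.1 ∨ (a.1 = 0 ∧ b'.1 = 1) ∨ (a.1 = 1 ∧ b'.1 = 0))
        with h | ⟨ha, hb'⟩ | ⟨ha, hb'⟩
      · exact Fin.ext h
      · exfalso; apply hpq
        have hEa : E a = p := by simp [hEdef, ha]
        have hEb : E b' = q := by simp [hEdef, hb']
        rw [← hEa, ← hEb, hab]
      · exfalso; apply hpq
        have hEa : E a = q := by simp [hEdef, ha]
        have hEb : E b' = p := by simp [hEdef, hb']
        rw [← hEa, ← hEb, hab]
    set e : Fin k ↪ Fin n := ⟨E, hEinj⟩ with hedef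
    have hfE : ∀ j : Fin k, f (e j) = c + ((j.1 - 1 : ℕ) : ZMod m) :=
      fun j => hM _ _ (hPE j)
    have hPeq : patOf e f = P := by
      funext i
      by_cases h : ∃ j, E j = i
      · obtain ⟨j, rfl⟩ := h
        have h' : ∃ j', e j' = E j := ⟨j, rfl⟩
        simp only [patOf, dif_pos h']
        rw [hPE j]
        congr 1
        exact hfE j
      · have h' : ¬ ∃ j', e j' = i := h
        simp only [patOf, dif_neg h']
        cases hPi : P i with
        | none => rfl
        | some c' =>
          exfalso
          obtain ⟨j₀, hj₀le, rfl⟩ := hall i c' hPi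
          by_cases hj0 : j₀ = 0
          · subst hj0
            norm_num at hPi
            rcases hPQ i hPi with rfl | rfl
            · exact h ⟨z, by simp [hEdef, hz1]⟩
            · exact h ⟨o, by simp [hEdef, hodef]⟩
          · have hj₀1 : 1 ≤ j₀ := by omega
            have hlt : j₀ + 1 < k := by omega
            apply h
            refine ⟨⟨j₀ + 1, hlt⟩, ?_⟩
            have hEj : E ⟨j₀ + 1, hlt⟩ = (hA j₀ hj₀1 hj₀le).choose := by
              simp only [hEdef, dif_neg (by omega : ¬(j₀ + 1) = 0),
                dif_neg (by omega : ¬(j₀ + 1) = 1)]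
            rw [hEj]
            exact ((hA j₀ hj₀1 hj₀le).choose_spec.2 i hPi).symm
    refine ⟨⟨c, e, ⟨f, hfE⟩⟩, ?_⟩
    simp only [hφ]
    refine Prod.ext ?_ (Subtype.ext ?_)
    · show decide (E z < E o) = b
      have hEz : E z = p := by simp [hEdef, hzdef]
      have hEo : E o = q := by simp [hEdef, hodef]
      rw [hEz, hEo]; exact hdec
    · show (f, patOf e f) = (f, P)
      rw [hPeq]

end Stmt8Aux

namespace Stmt8Aux

lemma two_mul_Sk_eq {n m k : ℕ} (h1 : 2 ≤ k) (hk : k ≤ n) (hm : n ≤ m) :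
    2 * Nat.card (Sk n m k) = n.descFactorial k * m ^ (n - k + 1) := by
  rw [← two_mul_card_Sk h1 hk hm, card_Tk h1 hk hm, pow_succ]
  ring

end Stmt8Aux

open Stmt8Aux in
theorem stmt8 (n m : ℕ) (h1 : 2 ≤ n) (h2 : n ≤ m) :
    2 * Nat.card {x : (Fin n → ZMod m) × ℕ × (Fin n → Option (ZMod m)) //
        2 ≤ x.2.1 ∧ x.2.1 ≤ n ∧ IsPattern x.2.1 x.2.2 ∧ Matches x.1 x.2.2} =
      ∑ k ∈ Finset.Icc 2 n, n.descFactorial k * m ^ (n - k + 1) := by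
  haveI : NeZero m := ⟨by omega⟩
  haveI hfin : ∀ K : {k : ℕ // k ∈ Finset.Icc 2 n}, Finite (Sk n m K.1) := by
    intro K
    unfold Sk
    infer_instance
  have hequiv : {x : (Fin n → ZMod m) × ℕ × (Fin n → Option (ZMod m)) //
        2 ≤ x.2.1 ∧ x.2.1 ≤ n ∧ IsPattern x.2.1 x.2.2 ∧ Matches x.1 x.2.2} ≃
      Σ K : {k : ℕ // k ∈ Finset.Icc 2 n}, Sk n m K.1 :=
    { toFun := fun x =>
        ⟨⟨x.1.2.1, Finset.mem_Icc.mpr ⟨x.2.1, x.2.2.1⟩⟩,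
          ⟨(x.1.1, x.1.2.2), x.2.2.2⟩⟩
      invFun := fun y =>
        ⟨(y.2.1.1, y.1.1, y.2.1.2),
          (Finset.mem_Icc.mp y.1.2).1, (Finset.mem_Icc.mp y.1.2).2, y.2.2⟩
      left_inv := fun x => rfl
      right_inv := fun y => rfl }
  rw [Nat.card_congr hequiv, ncard_sigma, Finset.mul_sum]
  rw [← Finset.sum_coe_sort (Finset.Icc 2 n)
    (fun k => n.descFactorial k * m ^ (n - k + 1))]
  apply Finset.sum_congr rfl
  intro K _
  obtain ⟨hk1, hk2⟩ := Finset.mem_Icc.mp K.2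
  exact two_mul_Sk_eq hk1 hk2 h2
end
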